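/- arXiv:1308.5809 — 10 statements merged into one kernel-verified Lean document; each statement's English description precedes it below -/
import Mathlib

section
/- Lemma 1 (IASB1 is tighter than CA-DSB): In the per-user per-tone spectrum optimization setup, for all s ∈ [0, M]: f(s) ≤ f^IASB1(s) ≤ f^CADSB(s). -/
lemma log_term_hasDeriv (c a z st : ℝ) (hc : 0 < c) (hizt : 0 < a * st + z) :
    HasDerivAt (fun x => Real.log (1 + c / (a * x + z)))
      (-(c * a) / ((a * st + z) * (c + (a * st + z)))) st := by
  have h1 : HasDerivAt (fun x : ℝ => a * x + z) a st := by
    simpa using ((hasDerivAt_id st).const_mul a).add_const z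
  have h2 : HasDerivAt (fun x => 1 + c / (a * x + z))
      (-(c * a) / (a * st + z) ^ 2) st := by
    have h3 := ((hasDerivAt_const st c).div h1 hizt.ne').const_add 1
    convert h3 using 1
    · rfl
    · rfl
    · rfl
    ring
  have h5 : 0 < 1 + c / (a * st + z) := by
    have := div_pos hc hizt; linarith
  have h6 := h2.log h5.ne'
  convert h6 using 1
  rw [div_eq_div_iff (by positivity) (by positivity)]
  field_simp
  ring

lemma log_affine_hasDeriv (c a z st : ℝ) (h : 0 < c + a * st + z) :
    HasDerivAt (fun x => Real.log (c + a * x + z)) (a / (c + a * st + z)) st := by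
  have h1 : HasDerivAt (fun x : ℝ => c + a * x + z) a st := by
    simpa using (((hasDerivAt_id st).const_mul a).const_add c).add_const z
  exact h1.log h.ne'

lemma log_one_add_div_hasDeriv (intn st : ℝ) (hintn : 0 < intn) (hst : 0 ≤ st) :
    HasDerivAt (fun x => Real.log (1 + x / intn)) (1 / (st + intn)) st := by
  have h1 : HasDerivAt (fun x : ℝ => 1 + x / intn) (1 / intn) st :=
    ((hasDerivAt_id st).div_const intn).const_add 1
  have h5 : 0 < 1 + st / intn := by positivity
  have h6 := h1.log h5.ne'
  convert h6 using 1
  rw [div_eq_div_iff (by positivity) (by positivity)]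
  field_simp
  ring

lemma term1 (w c a z s st : ℝ) (hw : 0 < w) (hc : 0 < c)
    (his : 0 < a * s + z) (hist : 0 < a * st + z) :
    w * Real.log (1 + c / (a * st + z))
      - w * (c * a / ((a * st + z) * (c + (a * st + z)))) * (s - st)
      ≤ w * Real.log (1 + c / (a * s + z)) := by
  have hrs : 0 < c + (a * s + z) := by linarith
  have hrst : 0 < c + (a * st + z) := by linarith
  have e1 : (1 : ℝ) + c / (a * s + z) = (c + (a * s + z)) / (a * s + z) := by
    field_simp
    ring
  have e2 : (1 : ℝ) + c / (a * st + z) = (c + (a * st + z)) / (a * st + z) := by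
    field_simp
    ring
  rw [e1, e2, Real.log_div hrs.ne' his.ne', Real.log_div hrst.ne' hist.ne']
  have hY : 0 < (c + (a * st + z)) * (a * s + z) / ((a * st + z) * (c + (a * s + z))) := by
    positivity
  have hlog := Real.log_le_sub_one_of_pos hY
  rw [Real.log_div (by positivity) (by positivity), Real.log_mul hrst.ne' his.ne',
    Real.log_mul hist.ne' hrs.ne'] at hlog
  have h1 : (c + (a * st + z)) * (a * s + z) / ((a * st + z) * (c + (a * s + z))) - 1
      = c * a * (s - st) / ((a * st + z) * (c + (a * s + z))) := by
    field_simp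
    ring
  have h2 : c * a * (s - st) / ((a * st + z) * (c + (a * s + z)))
      ≤ c * a * (s - st) / ((a * st + z) * (c + (a * st + z))) := by
    rw [div_le_div_iff₀ (by positivity) (by positivity)]
    nlinarith [mul_nonneg (mul_nonneg hc.le hist.le) (sq_nonneg (a * s - a * st)),
      mul_pos hist hrst, mul_pos hist hrs]
  have h3 : Real.log (c + (a * st + z)) + Real.log (a * s + z)
      - (Real.log (a * st + z) + Real.log (c + (a * s + z)))
      ≤ c * a * (s - st) / ((a * st + z) * (c + (a * st + z))) := by
    calc _ ≤ _ := hlog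
    _ = c * a * (s - st) / ((a * st + z) * (c + (a * s + z))) := h1
    _ ≤ _ := h2
  have h4 := mul_le_mul_of_nonneg_left h3 hw.le
  have h5 : w * (c * a / ((a * st + z) * (c + (a * st + z)))) * (s - st)
      = w * (c * a * (s - st) / ((a * st + z) * (c + (a * st + z)))) := by ring
  linarith

lemma term2 (w c a z s st : ℝ) (hw : 0 < w) (hc : 0 < c)
    (his : 0 < a * s + z) (hist : 0 < a * st + z) :
    w * Real.log (c + a * s + z)
      + w * (c * a / ((a * st + z) * (c + (a * st + z)))) * (s - st)
      ≤ w * Real.log (c + a * st + z) + w * (a / (a * st + z)) * (s - st) := by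
  have hrs : 0 < c + a * s + z := by linarith
  have hrst : 0 < c + a * st + z := by linarith
  have hrst' : c + (a * st + z) ≠ 0 := by intro h; nlinarith
  have hY : 0 < (c + a * s + z) / (c + a * st + z) := by positivity
  have hlog := Real.log_le_sub_one_of_pos hY
  rw [Real.log_div hrs.ne' hrst.ne'] at hlog
  have h1 : (c + a * s + z) / (c + a * st + z) - 1
      = a * (s - st) / (c + a * st + z) := by
    field_simp
    ring
  have h2 : w * (a / (a * st + z)) * (s - st)
      - w * (c * a / ((a * st + z) * (c + (a * st + z)))) * (s - st)
      = w * (a * (s - st) / (c + a * st + z)) := by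
    field_simp
    ring
  have h4 := mul_le_mul_of_nonneg_left (hlog.trans (le_of_eq h1)) hw.le
  linarith

/-- Lemma 1 (IASB1 is tighter than CA-DSB): in the per-user per-tone spectrum
optimization setup, the IASB1 approximation upper bounds the true objective `f`
on `[0, M]` and is itself upper bounded by the CA-DSB approximation.
Here `f^X = f1_X + LIN(f − f1_X)` with `LIN` the linearization at `s̃`. -/
theorem IASB1_tighter_than_CADSB
    {ι : Type*} (I : Finset ι)
    (M st w intn : ℝ) (wI aI sI zI : ι → ℝ)
    (hM : 0 < M) (hst : st ∈ Set.Icc 0 M)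
    (hw : 0 < w) (hintn : 0 < intn)
    (hwI : ∀ m ∈ I, 0 < wI m) (haI : ∀ m ∈ I, 0 ≤ aI m)
    (hsI : ∀ m ∈ I, 0 < sI m) (hzI : ∀ m ∈ I, 0 < zI m)
    (f f1IASB1 f1CADSB fIASB1 fCADSB : ℝ → ℝ)
    (hf : f = fun s => -w * Real.log (1 + s / intn)
        - ∑ m ∈ I, wI m * Real.log (1 + sI m / (aI m * s + zI m)))
    (hf1IASB1 : f1IASB1 = fun s => -w * Real.log (1 + s / intn))
    (hf1CADSB : f1CADSB = fun s => -w * Real.log (s + intn)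
        - ∑ m ∈ I, wI m * Real.log (sI m + aI m * s + zI m))
    (hfIASB1 : fIASB1 = fun s => f1IASB1 s + (f st - f1IASB1 st)
        + deriv (fun x => f x - f1IASB1 x) st * (s - st))
    (hfCADSB : fCADSB = fun s => f1CADSB s + (f st - f1CADSB st)
        + deriv (fun x => f x - f1CADSB x) st * (s - st)) :
    ∀ s ∈ Set.Icc 0 M, f s ≤ fIASB1 s ∧ fIASB1 s ≤ fCADSB s := by
  subst hf hf1IASB1 hf1CADSB hfIASB1 hfCADSB
  obtain ⟨hst0, hstM⟩ := hst
  intro s hs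
  obtain ⟨hs0, hsM⟩ := hs
  simp only []
  have hist : ∀ m ∈ I, 0 < aI m * st + zI m := fun m hm => by
    have h1 := mul_nonneg (haI m hm) hst0
    have h2 := hzI m hm
    linarith
  have his : ∀ m ∈ I, 0 < aI m * s + zI m := fun m hm => by
    have h1 := mul_nonneg (haI m hm) hs0
    have h2 := hzI m hm
    linarith
  have hrst : ∀ m ∈ I, 0 < sI m + aI m * st + zI m := fun m hm => by
    have h1 := hist m hm
    have h2 := hsI m hm
    linarith
  -- derivative of the sum in f
  have HsumI : HasDerivAt
      (fun x => ∑ m ∈ I, wI m * Real.log (1 + sI m / (aI m * x + zI m)))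
      (∑ m ∈ I, wI m * (-(sI m * aI m) / ((aI m * st + zI m) * (sI m + (aI m * st + zI m))))) st :=
    HasDerivAt.fun_sum fun m hm =>
      (log_term_hasDeriv (sI m) (aI m) (zI m) st (hsI m hm) (hist m hm)).const_mul (wI m)
  -- deriv (f - f1IASB1)
  have HDI : HasDerivAt
      (fun x => -w * Real.log (1 + x / intn)
        - ∑ m ∈ I, wI m * Real.log (1 + sI m / (aI m * x + zI m))
        - -w * Real.log (1 + x / intn))
      (∑ m ∈ I, wI m * (sI m * aI m / ((aI m * st + zI m) * (sI m + (aI m * st + zI m))))) st := by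
    have hfun : (fun x => -w * Real.log (1 + x / intn)
        - ∑ m ∈ I, wI m * Real.log (1 + sI m / (aI m * x + zI m))
        - -w * Real.log (1 + x / intn))
        = fun x => -∑ m ∈ I, wI m * Real.log (1 + sI m / (aI m * x + zI m)) := by
      funext x; ring
    rw [hfun]
    convert HsumI.neg using 1
    · rfl
    · rfl
    · rfl
    rw [← Finset.sum_neg_distrib]
    exact Finset.sum_congr rfl fun m hm => by ring
  -- deriv (f - f1CADSB)
  have HA : HasDerivAt (fun x => -w * Real.log (1 + x / intn)) (-w * (1 / (st + intn))) st :=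
    (log_one_add_div_hasDeriv intn st hintn hst0).const_mul (-w)
  have HC : HasDerivAt (fun x => -w * Real.log (x + intn)) (-w * (1 / (st + intn))) st := by
    have h1 := ((hasDerivAt_id st).add_const intn).log (by positivity : st + intn ≠ 0)
    simpa using h1.const_mul (-w)
  have HDsum : HasDerivAt
      (fun x => ∑ m ∈ I, wI m * Real.log (sI m + aI m * x + zI m))
      (∑ m ∈ I, wI m * (aI m / (sI m + aI m * st + zI m))) st :=
    HasDerivAt.fun_sum fun m hm =>
      (log_affine_hasDeriv (sI m) (aI m) (zI m) st (hrst m hm)).const_mul (wI m)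
  have HDC : HasDerivAt
      (fun x => -w * Real.log (1 + x / intn)
        - ∑ m ∈ I, wI m * Real.log (1 + sI m / (aI m * x + zI m))
        - (-w * Real.log (x + intn) - ∑ m ∈ I, wI m * Real.log (sI m + aI m * x + zI m)))
      (∑ m ∈ I, wI m * (aI m / (aI m * st + zI m))) st := by
    have H := (HA.sub HsumI).sub (HC.sub HDsum)
    convert H using 1
    · rfl
    · rfl
    · rfl
    have e : ∀ m ∈ I, wI m * (aI m / (aI m * st + zI m))
        = wI m * (aI m / (sI m + aI m * st + zI m))
          - wI m * (-(sI m * aI m) / ((aI m * st + zI m) * (sI m + (aI m * st + zI m)))) := by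
      intro m hm
      have h1 := hist m hm
      have h2 := hsI m hm
      have h3 : sI m + (aI m * st + zI m) ≠ 0 := by intro h; nlinarith
      have h4 : sI m + aI m * st + zI m ≠ 0 := by intro h; nlinarith
      field_simp
      ring
    rw [Finset.sum_congr rfl e, Finset.sum_sub_distrib]
    ring
  rw [HDI.deriv, HDC.deriv]
  constructor
  · -- f ≤ fIASB1
    have key1 : ∀ m ∈ I,
        wI m * Real.log (1 + sI m / (aI m * st + zI m))
          - wI m * (sI m * aI m / ((aI m * st + zI m) * (sI m + (aI m * st + zI m)))) * (s - st)
          ≤ wI m * Real.log (1 + sI m / (aI m * s + zI m)) := fun m hm =>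
      term1 (wI m) (sI m) (aI m) (zI m) s st (hwI m hm) (hsI m hm) (his m hm) (hist m hm)
    have hsum1 := Finset.sum_le_sum key1
    rw [Finset.sum_sub_distrib, ← Finset.sum_mul] at hsum1
    linarith
  · -- fIASB1 ≤ fCADSB
    have key2 : ∀ m ∈ I,
        wI m * Real.log (sI m + aI m * s + zI m)
          + wI m * (sI m * aI m / ((aI m * st + zI m) * (sI m + (aI m * st + zI m)))) * (s - st)
          ≤ wI m * Real.log (sI m + aI m * st + zI m)
            + wI m * (aI m / (aI m * st + zI m)) * (s - st) := fun m hm =>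
      term2 (wI m) (sI m) (aI m) (zI m) s st (hwI m hm) (hsI m hm) (his m hm) (hist m hm)
    have hsum2 := Finset.sum_le_sum key2
    rw [Finset.sum_add_distrib, Finset.sum_add_distrib, ← Finset.sum_mul, ← Finset.sum_mul] at hsum2
    have es : Real.log (1 + s / intn) = Real.log (s + intn) - Real.log intn := by
      rw [show (1 : ℝ) + s / intn = (s + intn) / intn from by field_simp; ring,
        Real.log_div (by positivity) hintn.ne']
    have est : Real.log (1 + st / intn) = Real.log (st + intn) - Real.log intn := by
      rw [show (1 : ℝ) + st / intn = (st + intn) / intn from by field_simp; ring,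
        Real.log_div (by positivity) hintn.ne']
    rw [es, est]
    linarith
end

section
/- Validity of the IASB2 tuning value (equation (38)): In the per-user per-tone spectrum optimization setup, define L* = Σ_{m∈I} w_m·s̃_m·a_m²·(s̃_m + 2·int_m(M)) / (2·(rec_m(M)·int_m(M))²). Then the function g(s) = −Σ_{m∈I} w_m·log(1 + s̃_m/int_m(s)) + L*·(s − s̃)² satisfies g″(s) ≤ 0 for all s ∈ [0, M], with equality g″(M) = 0; in particular g is concave on [0, M] and hence upper bounded on [0, M] by its tangent line at any point of [0, M]. -/
lemma IASB2_aux_mono (c t T : ℝ) (hc : 0 < c) (ht : 0 < t) (htT : t ≤ T) :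
    (c + 2*T) / ((c+T)*T)^2 ≤ (c + 2*t) / ((c+t)*t)^2 := by
  have hT : 0 < T := lt_of_lt_of_le ht htT
  rw [div_le_div_iff₀ (by positivity) (by positivity)]
  obtain ⟨d, hd, rfl⟩ : ∃ d, 0 ≤ d ∧ T = t + d := ⟨T - t, by linarith, by ring⟩
  nlinarith [mul_nonneg ht.le (pow_nonneg hd 4), mul_nonneg (sq_nonneg t) (pow_nonneg hd 3),
    mul_nonneg (pow_nonneg ht.le 3) (sq_nonneg d), mul_nonneg (pow_nonneg ht.le 4) hd,
    mul_nonneg hc.le (pow_nonneg hd 4), mul_nonneg (mul_nonneg hc.le ht.le) (pow_nonneg hd 3),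
    mul_nonneg (mul_nonneg hc.le (sq_nonneg t)) (sq_nonneg d),
    mul_nonneg (mul_nonneg hc.le (pow_nonneg ht.le 3)) hd,
    mul_nonneg (sq_nonneg c) (pow_nonneg hd 3),
    mul_nonneg (mul_nonneg (sq_nonneg c) ht.le) (sq_nonneg d),
    mul_nonneg (mul_nonneg (sq_nonneg c) (sq_nonneg t)) hd,
    mul_nonneg (pow_nonneg hc.le 3) (sq_nonneg d),
    mul_nonneg (mul_nonneg (pow_nonneg hc.le 3) ht.le) hd]

/-- Validity of the IASB2 tuning value (equation (38)): with the closed-form value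
`L* = Σ_{m∈I} w_m·s̃_m·a_m²·(s̃_m + 2·int_m(M)) / (2·(rec_m(M)·int_m(M))²)`, the
function `g(s) = −Σ_{m∈I} w_m·log(1 + s̃_m/int_m(s)) + L*·(s − s̃)²` has `g″ ≤ 0` on
`[0, M]` with `g″(M) = 0`; in particular `g` is concave on `[0, M]` and upper
bounded on `[0, M]` by its tangent line at any point of `[0, M]`. -/
theorem IASB2_tuning_value_valid
    {ι : Type*} (I : Finset ι)
    (M st w intn : ℝ) (wI aI sI zI : ι → ℝ)
    (hM : 0 < M) (hst : st ∈ Set.Icc 0 M)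
    (hw : 0 < w) (hintn : 0 < intn)
    (hwI : ∀ m ∈ I, 0 < wI m) (haI : ∀ m ∈ I, 0 ≤ aI m)
    (hsI : ∀ m ∈ I, 0 < sI m) (hzI : ∀ m ∈ I, 0 < zI m)
    (Lstar : ℝ)
    (hLstar : Lstar = ∑ m ∈ I, wI m * sI m * (aI m) ^ 2 * (sI m + 2 * (aI m * M + zI m))
        / (2 * ((sI m + aI m * M + zI m) * (aI m * M + zI m)) ^ 2))
    (g : ℝ → ℝ)
    (hg : g = fun s =>
        -(∑ m ∈ I, wI m * Real.log (1 + sI m / (aI m * s + zI m))) + Lstar * (s - st) ^ 2) :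
    (∀ s ∈ Set.Icc 0 M, deriv (deriv g) s ≤ 0) ∧
    deriv (deriv g) M = 0 ∧
    ConcaveOn ℝ (Set.Icc 0 M) g ∧
    ∀ x ∈ Set.Icc 0 M, ∀ s ∈ Set.Icc 0 M, g s ≤ g x + deriv g x * (s - x) := by
  -- the open set where everything is smooth
  set U : Set ℝ := {s | ∀ m ∈ I, 0 < aI m * s + zI m} with hUdef
  have hUopen : IsOpen U := by
    have : U = ⋂ m ∈ I, {s : ℝ | 0 < aI m * s + zI m} := by
      ext s; simp [hUdef, Set.mem_iInter]
    rw [this]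
    exact isOpen_biInter_finset fun m _ =>
      isOpen_lt continuous_const (by continuity)
  have hsubU : Set.Icc (0:ℝ) M ⊆ U := by
    intro s hs m hm
    have := haI m hm; have := hzI m hm
    nlinarith [hs.1]
  -- first and second derivative candidates
  set g1 : ℝ → ℝ := fun s =>
    (∑ m ∈ I, wI m * sI m * aI m / ((sI m + aI m * s + zI m) * (aI m * s + zI m)))
      + Lstar * (2 * (s - st)) with hg1def
  set g2 : ℝ → ℝ := fun s =>
    -(∑ m ∈ I, wI m * sI m * (aI m) ^ 2 * (sI m + 2 * (aI m * s + zI m))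
        / ((sI m + aI m * s + zI m) * (aI m * s + zI m)) ^ 2) + Lstar * 2 with hg2def
  -- g has derivative g1 on U
  have hd1 : ∀ s ∈ U, HasDerivAt g (g1 s) s := by
    intro s hs
    rw [hg]
    have hsum : HasDerivAt
        (fun s => ∑ m ∈ I, wI m * Real.log (1 + sI m / (aI m * s + zI m)))
        (∑ m ∈ I, -(wI m * sI m * aI m / ((sI m + aI m * s + zI m) * (aI m * s + zI m)))) s := by
      apply HasDerivAt.fun_sum
      intro m hm
      have ht : 0 < aI m * s + zI m := hs m hm
      have hc : 0 < sI m := hsI m hm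
      have hden : HasDerivAt (fun s => aI m * s + zI m) (aI m) s := by
        simpa using ((hasDerivAt_id s).const_mul (aI m)).add_const (zI m)
      have hdiv : HasDerivAt (fun s => sI m / (aI m * s + zI m))
          ((0 * (aI m * s + zI m) - sI m * aI m) / (aI m * s + zI m) ^ 2) s :=
        (hasDerivAt_const s (sI m)).div hden ht.ne'
      have hone : HasDerivAt (fun s => 1 + sI m / (aI m * s + zI m))
          ((0 * (aI m * s + zI m) - sI m * aI m) / (aI m * s + zI m) ^ 2) s := by
        simpa using hdiv.const_add 1
      have hpos : (0:ℝ) < 1 + sI m / (aI m * s + zI m) := by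
        have := div_pos hc ht; linarith
      have hlog := (hone.log hpos.ne').const_mul (wI m)
      refine hlog.congr_deriv ?_
      have hrec : sI m + aI m * s + zI m ≠ 0 := by nlinarith
      field_simp
      ring
    have hquad : HasDerivAt (fun s => Lstar * (s - st) ^ 2)
        (Lstar * (2 * (s - st))) s := by
      have := (((hasDerivAt_id s).sub_const st).pow 2).const_mul Lstar
      refine this.congr_deriv ?_
      simp only [id_eq]
      push_cast
      ring
    have := hsum.neg.add hquad
    refine this.congr_deriv ?_
    simp [hg1def, Finset.sum_neg_distrib]
  -- g1 has derivative g2 on U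
  have hd2 : ∀ s ∈ U, HasDerivAt g1 (g2 s) s := by
    intro s hs
    rw [hg1def]
    have hsum : HasDerivAt
        (fun s => ∑ m ∈ I, wI m * sI m * aI m / ((sI m + aI m * s + zI m) * (aI m * s + zI m)))
        (∑ m ∈ I, -(wI m * sI m * (aI m) ^ 2 * (sI m + 2 * (aI m * s + zI m))
          / ((sI m + aI m * s + zI m) * (aI m * s + zI m)) ^ 2)) s := by
      apply HasDerivAt.fun_sum
      intro m hm
      have ht : 0 < aI m * s + zI m := hs m hm
      have hc : 0 < sI m := hsI m hm
      have hf : HasDerivAt (fun s => sI m + aI m * s + zI m) (aI m) s := by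
        simpa using (((hasDerivAt_id s).const_mul (aI m)).const_add (sI m)).add_const (zI m)
      have hk : HasDerivAt (fun s => aI m * s + zI m) (aI m) s := by
        simpa using ((hasDerivAt_id s).const_mul (aI m)).add_const (zI m)
      have hD : HasDerivAt (fun s => (sI m + aI m * s + zI m) * (aI m * s + zI m))
          (aI m * (aI m * s + zI m) + (sI m + aI m * s + zI m) * aI m) s := hf.mul hk
      have hDne : (sI m + aI m * s + zI m) * (aI m * s + zI m) ≠ 0 :=
        ne_of_gt (mul_pos (by linarith) ht)
      have := (hasDerivAt_const s (wI m * sI m * aI m)).div hD hDne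
      refine this.congr_deriv ?_
      field_simp
      ring
    have hlin : HasDerivAt (fun s => Lstar * (2 * (s - st))) (Lstar * 2) s := by
      simpa using (((hasDerivAt_id s).sub_const st).const_mul 2).const_mul Lstar
    have := hsum.add hlin
    refine this.congr_deriv ?_
    simp [hg2def, Finset.sum_neg_distrib]
  -- deriv g = g1 on U, deriv (deriv g) = g2 on U
  have hderiv1 : ∀ s ∈ U, deriv g s = g1 s := fun s hs => (hd1 s hs).deriv
  have hderiv2 : ∀ s ∈ U, deriv (deriv g) s = g2 s := by
    intro s hs
    have heq : deriv g =ᶠ[nhds s] g1 := by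
      filter_upwards [hUopen.mem_nhds hs] with y hy using hderiv1 y hy
    rw [heq.deriv_eq]
    exact (hd2 s hs).deriv
  -- termwise value at M equals 2 * Lstar
  have h2L : Lstar * 2 = ∑ m ∈ I, wI m * sI m * (aI m) ^ 2 * (sI m + 2 * (aI m * M + zI m))
      / ((sI m + aI m * M + zI m) * (aI m * M + zI m)) ^ 2 := by
    rw [hLstar, Finset.sum_mul]
    refine Finset.sum_congr rfl fun m hm => ?_
    have ht : 0 < aI m * M + zI m := hsubU (Set.right_mem_Icc.2 hM.le) m hm
    have hc : 0 < sI m := hsI m hm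
    have : ((sI m + aI m * M + zI m) * (aI m * M + zI m)) ^ 2 ≠ 0 :=
      pow_ne_zero _ (ne_of_gt (mul_pos (by linarith) ht))
    field_simp
  -- g'' ≤ 0 on [0, M]
  have hle : ∀ s ∈ Set.Icc (0:ℝ) M, deriv (deriv g) s ≤ 0 := by
    intro s hs
    rw [hderiv2 s (hsubU hs), hg2def]
    have key : Lstar * 2 ≤ ∑ m ∈ I, wI m * sI m * (aI m) ^ 2 * (sI m + 2 * (aI m * s + zI m))
        / ((sI m + aI m * s + zI m) * (aI m * s + zI m)) ^ 2 := by
      rw [h2L]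
      refine Finset.sum_le_sum fun m hm => ?_
      have ht : 0 < aI m * s + zI m := hsubU hs m hm
      have hc : 0 < sI m := hsI m hm
      have htT : aI m * s + zI m ≤ aI m * M + zI m := by
        have := haI m hm
        nlinarith [hs.2]
      have := IASB2_aux_mono (sI m) (aI m * s + zI m) (aI m * M + zI m) hc ht htT
      have hnn : 0 ≤ wI m * sI m * (aI m) ^ 2 :=
        mul_nonneg (mul_nonneg (hwI m hm).le hc.le) (sq_nonneg _)
      calc wI m * sI m * (aI m) ^ 2 * (sI m + 2 * (aI m * M + zI m))
            / ((sI m + aI m * M + zI m) * (aI m * M + zI m)) ^ 2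
          = wI m * sI m * (aI m) ^ 2 *
              ((sI m + 2 * (aI m * M + zI m))
                / ((sI m + (aI m * M + zI m)) * (aI m * M + zI m)) ^ 2) := by
            rw [mul_div_assoc]; ring_nf
        _ ≤ wI m * sI m * (aI m) ^ 2 *
              ((sI m + 2 * (aI m * s + zI m))
                / ((sI m + (aI m * s + zI m)) * (aI m * s + zI m)) ^ 2) :=
            mul_le_mul_of_nonneg_left this hnn
        _ = wI m * sI m * (aI m) ^ 2 * (sI m + 2 * (aI m * s + zI m))
            / ((sI m + aI m * s + zI m) * (aI m * s + zI m)) ^ 2 := by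
            rw [mul_div_assoc]; ring_nf
    linarith
  -- g'' M = 0
  have heqM : deriv (deriv g) M = 0 := by
    rw [hderiv2 M (hsubU (Set.right_mem_Icc.2 hM.le)), hg2def]
    simp only
    rw [h2L]
    ring
  -- concavity
  have hconc : ConcaveOn ℝ (Set.Icc 0 M) g := by
    apply concaveOn_of_deriv2_nonpos (convex_Icc 0 M)
    · exact fun s hs => (hd1 s (hsubU hs)).differentiableAt.continuousAt.continuousWithinAt
    · intro s hs
      rw [interior_Icc] at hs
      exact (hd1 s (hsubU (Set.Ioo_subset_Icc_self hs))).differentiableAt.differentiableWithinAt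
    · intro s hs
      rw [interior_Icc] at hs
      have hsU : s ∈ U := hsubU (Set.Ioo_subset_Icc_self hs)
      have heq : g1 =ᶠ[nhds s] deriv g := by
        filter_upwards [hUopen.mem_nhds hsU] with y hy using (hderiv1 y hy).symm
      exact (heq.differentiableAt_iff.1 (hd2 s hsU).differentiableAt).differentiableWithinAt
    · intro s hs
      rw [interior_Icc] at hs
      have : deriv^[2] g s = deriv (deriv g) s := rfl
      rw [this]
      exact hle s (Set.Ioo_subset_Icc_self hs)
  refine ⟨hle, heqM, hconc, ?_⟩
  -- tangent line bound
  intro x hx s hs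
  rcases lt_trichotomy s x with hsx | rfl | hxs
  · have hslope := hconc.le_slope_of_hasDerivAt hs hx hsx (hd1 x (hsubU hx))
    rw [slope_def_field] at hslope
    rw [hderiv1 x (hsubU hx)]
    have hpos : 0 < x - s := by linarith
    have h1 := (le_div_iff₀ hpos).1 hslope
    have h2 : g1 x * (s - x) = -(g1 x * (x - s)) := by ring
    linarith
  · simp
  · have hslope := hconc.slope_le_of_hasDerivAt hx hs hxs (hd1 x (hsubU hx))
    rw [slope_def_field] at hslope
    rw [hderiv1 x (hsubU hx)]
    have hpos : 0 < s - x := by linarith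
    rw [div_le_iff₀ hpos] at hslope
    linarith
end

section
/- Validity of the convex-variant IASB2 tuning value (equation (39)): In the per-user per-tone spectrum optimization setup, let L* = Σ_{m∈I} w_m·s̃_m·a_m²·(s̃_m + 2·int_m(M)) / (2·(rec_m(M)·int_m(M))²) and set L = min( w/(2·(M + int)²), L* ). Then: (i) the function f1_IASB2(s) = −w·log(1 + s/int) − L·(s − s̃)² is convex on [0, M]; and (ii) the function f2_IASB2(s) = −Σ_{m∈I} w_m·log(1 + s̃_m/int_m(s)) + L·(s − s̃)² is concave on [0, M]. -/
open Set

private lemma IASB2_bracket (s t1 t2 : ℝ) (hs : 0 < s) (ht1 : 0 < t1) (ht2 : 0 < t2) :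
    (2*s+t1+t2)*(t1*t2)^2 ≤ (t1+t2)*((s+t1)*(s+t2))^2 := by
  nlinarith [sq_nonneg (t1-t2), mul_pos ht1 ht2, mul_pos (mul_pos ht1 ht2) (mul_pos ht1 ht2),
    mul_pos hs (mul_pos ht1 ht2), sq_nonneg s, mul_pos hs hs,
    mul_nonneg (mul_pos hs (mul_pos ht1 ht2)).le (sq_nonneg (t1-t2)),
    mul_pos (mul_pos hs hs) (mul_pos (add_pos ht1 ht2) (add_pos ht1 ht2)),
    mul_pos (mul_pos (mul_pos hs hs) hs) (add_pos ht1 ht2),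
    mul_pos (mul_pos (mul_pos hs hs) (mul_pos hs hs)) (add_pos ht1 ht2),
    mul_pos (mul_pos hs (mul_pos ht1 ht2)) (add_pos ht1 ht2),
    mul_pos (mul_pos (mul_pos hs hs) (mul_pos ht1 ht2)) (add_pos ht1 ht2),
    mul_pos (mul_pos (mul_pos hs (mul_pos hs hs)) (add_pos ht1 ht2)) (add_pos ht1 ht2)]

private lemma IASB2_key_mono (s t1 t2 : ℝ) (hs : 0 < s) (ht1 : 0 < t1) (h12 : t1 ≤ t2) :
    s*(s+2*t2)/((s+t2)*t2)^2 ≤ s*(s+2*t1)/((s+t1)*t1)^2 := by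
  have ht2 : 0 < t2 := lt_of_lt_of_le ht1 h12
  have e : ∀ t : ℝ, 0 < t → s*(s+2*t)/((s+t)*t)^2 = 1/t^2 - 1/(s+t)^2 := by
    intro t ht
    have h1 : (s+t) ≠ 0 := by positivity
    have h2 : t ≠ 0 := ne_of_gt ht
    field_simp
    ring
  rw [e t1 ht1, e t2 ht2]
  have h1 : (1:ℝ)/t1^2 - 1/t2^2 = (t2-t1)*(t1+t2)/(t1*t2)^2 := by
    field_simp; ring
  have h2 : (1:ℝ)/(s+t1)^2 - 1/(s+t2)^2 = (t2-t1)*(2*s+t1+t2)/((s+t1)*(s+t2))^2 := by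
    have hn1 : (s+t1) ≠ 0 := by positivity
    have hn2 : (s+t2) ≠ 0 := by positivity
    field_simp; ring
  have hb := IASB2_bracket s t1 t2 hs ht1 ht2
  have hd : 0 ≤ t2 - t1 := sub_nonneg.2 h12
  have key : (t2-t1)*(2*s+t1+t2)/((s+t1)*(s+t2))^2 ≤ (t2-t1)*(t1+t2)/(t1*t2)^2 := by
    rw [div_le_div_iff₀ (by positivity) (by positivity)]
    calc (t2-t1)*(2*s+t1+t2) * (t1*t2)^2 = (t2-t1) * ((2*s+t1+t2)*(t1*t2)^2) := by ring
    _ ≤ (t2-t1) * ((t1+t2)*((s+t1)*(s+t2))^2) := mul_le_mul_of_nonneg_left hb hd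
    _ = (t2-t1)*(t1+t2) * ((s+t1)*(s+t2))^2 := by ring
  linarith

private lemma IASB2_convexOn_Icc (M : ℝ) (f f' f'' : ℝ → ℝ)
    (hd1 : ∀ x ∈ Icc (0:ℝ) M, HasDerivAt f (f' x) x)
    (hd2 : ∀ x ∈ Icc (0:ℝ) M, HasDerivAt f' (f'' x) x)
    (h0 : ∀ x ∈ Icc (0:ℝ) M, 0 ≤ f'' x) : ConvexOn ℝ (Icc 0 M) f := by
  have hint : interior (Icc (0:ℝ) M) = Ioo 0 M := interior_Icc
  have heq : ∀ x ∈ Ioo (0:ℝ) M, deriv f =ᶠ[nhds x] f' := by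
    intro x hx
    filter_upwards [isOpen_Ioo.mem_nhds hx] with y hy
    exact (hd1 y (Ioo_subset_Icc_self hy)).deriv
  apply convexOn_of_deriv2_nonneg (convex_Icc 0 M)
  · exact fun x hx => (hd1 x hx).continuousAt.continuousWithinAt
  · rw [hint]
    exact fun x hx =>
      ((hd1 x (Ioo_subset_Icc_self hx)).differentiableAt).differentiableWithinAt
  · rw [hint]; intro x hx
    have : DifferentiableAt ℝ (deriv f) x := by
      rw [(heq x hx).differentiableAt_iff]
      exact (hd2 x (Ioo_subset_Icc_self hx)).differentiableAt
    exact this.differentiableWithinAt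
  · rw [hint]; intro x hx
    have h2 : deriv (deriv f) x = f'' x := by
      rw [(heq x hx).deriv_eq]
      exact (hd2 x (Ioo_subset_Icc_self hx)).deriv
    simpa [Function.iterate_succ, h2] using h0 x (Ioo_subset_Icc_self hx)

private lemma IASB2_concaveOn_Icc (M : ℝ) (f f' f'' : ℝ → ℝ)
    (hd1 : ∀ x ∈ Icc (0:ℝ) M, HasDerivAt f (f' x) x)
    (hd2 : ∀ x ∈ Icc (0:ℝ) M, HasDerivAt f' (f'' x) x)
    (h0 : ∀ x ∈ Icc (0:ℝ) M, f'' x ≤ 0) : ConcaveOn ℝ (Icc 0 M) f := by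
  have h := IASB2_convexOn_Icc M (fun x => -f x) (fun x => -f' x) (fun x => -f'' x)
    (fun x hx => (hd1 x hx).neg) (fun x hx => (hd2 x hx).neg)
    (fun x hx => by simpa using h0 x hx)
  have h2 := h.neg
  have he : (-(fun x => -f x)) = f := by funext y; simp
  rwa [he] at h2

/-- Validity of the convex-variant IASB2 tuning value (equation (39)): with
`L = min(w/(2·(M + int)²), L*)` where `L*` is the value of equation (38),
(i) `f1_IASB2(s) = −w·log(1 + s/int) − L·(s − s̃)²` is convex on `[0, M]`, and
(ii) `f2_IASB2(s) = −Σ_{m∈I} w_m·log(1 + s̃_m/int_m(s)) + L·(s − s̃)²` is concave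
on `[0, M]`. -/
theorem IASB2_convex_variant_tuning_valid
    {ι : Type*} (I : Finset ι)
    (M st w intn : ℝ) (wI aI sI zI : ι → ℝ)
    (hM : 0 < M) (hst : st ∈ Set.Icc 0 M)
    (hw : 0 < w) (hintn : 0 < intn)
    (hwI : ∀ m ∈ I, 0 < wI m) (haI : ∀ m ∈ I, 0 ≤ aI m)
    (hsI : ∀ m ∈ I, 0 < sI m) (hzI : ∀ m ∈ I, 0 < zI m)
    (Lstar L : ℝ)
    (hLstar : Lstar = ∑ m ∈ I, wI m * sI m * (aI m) ^ 2 * (sI m + 2 * (aI m * M + zI m))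
        / (2 * ((sI m + aI m * M + zI m) * (aI m * M + zI m)) ^ 2))
    (hL : L = min (w / (2 * (M + intn) ^ 2)) Lstar)
    (f1IASB2 f2IASB2 : ℝ → ℝ)
    (hf1 : f1IASB2 = fun s => -w * Real.log (1 + s / intn) - L * (s - st) ^ 2)
    (hf2 : f2IASB2 = fun s =>
        -(∑ m ∈ I, wI m * Real.log (1 + sI m / (aI m * s + zI m))) + L * (s - st) ^ 2) :
    ConvexOn ℝ (Set.Icc 0 M) f1IASB2 ∧ ConcaveOn ℝ (Set.Icc 0 M) f2IASB2 := by
  -- basic facts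
  have hLle1 : L ≤ w / (2 * (M + intn) ^ 2) := hL ▸ min_le_left _ _
  have hLle2 : L ≤ Lstar := hL ▸ min_le_right _ _
  constructor
  · -- part (i): f1 convex
    rw [hf1]
    apply IASB2_convexOn_Icc M _ (fun x => -w/(intn+x) - L*(2*(x-st)))
      (fun x => w/(intn+x)^2 - 2*L)
    · intro x hx
      obtain ⟨hx0, hxM⟩ := hx
      have hpos : 0 < intn + x := by linarith
      have hu : (0:ℝ) < 1 + x / intn := by positivity
      have h1 : HasDerivAt (fun s : ℝ => 1 + s / intn) (1/intn) x := by
        simpa using ((hasDerivAt_id x).div_const intn).const_add 1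
      have h2 : HasDerivAt (fun s : ℝ => Real.log (1 + s / intn)) ((1/intn)/(1+x/intn)) x :=
        h1.log (ne_of_gt hu)
      have h3 : HasDerivAt (fun s : ℝ => L*(s-st)^2) (L*(2*(x-st))) x := by
        have := (((hasDerivAt_id x).sub_const st).pow 2).const_mul L
        simpa using this
      have h4 := (h2.const_mul (-w)).sub h3
      refine h4.congr_deriv ?_
      have hintn' : intn ≠ 0 := ne_of_gt hintn
      have : (1+x/intn) ≠ 0 := ne_of_gt hu
      field_simp
      try ring
    · intro x hx
      obtain ⟨hx0, hxM⟩ := hx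
      have hpos : 0 < intn + x := by linarith
      have h1 : HasDerivAt (fun s : ℝ => -w/(intn+s)) (w/(intn+x)^2) x := by
        have := (hasDerivAt_const x (-w)).div ((hasDerivAt_id x).const_add intn)
          (ne_of_gt hpos)
        refine this.congr_deriv ?_
        simp only [id]
        field_simp
        ring
      have h2 : HasDerivAt (fun s : ℝ => L*(2*(s-st))) (2*L) x := by
        have := (((hasDerivAt_id x).sub_const st).const_mul 2).const_mul L
        simpa [mul_comm] using this
      exact h1.sub h2
    · intro x hx
      obtain ⟨hx0, hxM⟩ := hx
      have hpos : 0 < intn + x := by linarith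
      have h1 : 2*L ≤ w/(M+intn)^2 := by
        have h2 : 0 < 2*(M+intn)^2 := by positivity
        have := hLle1
        rw [le_div_iff₀ h2] at this
        rw [le_div_iff₀ (by positivity)]
        nlinarith
      have h3 : w/(M+intn)^2 ≤ w/(intn+x)^2 := by
        apply div_le_div_of_nonneg_left hw.le (by positivity)
        nlinarith
      linarith
  · -- part (ii): f2 concave
    rw [hf2]
    set g : ι → ℝ → ℝ := fun m x => aI m * x + zI m with hg
    apply IASB2_concaveOn_Icc M _
      (fun x => -(∑ m ∈ I, wI m * (-(sI m * aI m) / ((sI m + g m x) * g m x)))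
        + L*(2*(x-st)))
      (fun x => -(∑ m ∈ I, wI m *
        (sI m * (aI m)^2 * (sI m + 2 * g m x) / ((sI m + g m x) * g m x)^2)) + 2*L)
    · intro x hx
      obtain ⟨hx0, hxM⟩ := hx
      have hsum : HasDerivAt (fun s : ℝ => ∑ m ∈ I, wI m * Real.log (1 + sI m / (aI m * s + zI m)))
          (∑ m ∈ I, wI m * (-(sI m * aI m) / ((sI m + g m x) * g m x))) x := by
        apply HasDerivAt.fun_sum
        intro m hm
        have ha := haI m hm; have hs := hsI m hm; have hz := hzI m hm
        have hden : 0 < g m x := by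
          have : 0 ≤ aI m * x := mul_nonneg ha hx0
          simp only [hg]; linarith
        have hu : (0:ℝ) < 1 + sI m / (aI m * x + zI m) := by
          have : 0 < sI m / (aI m * x + zI m) := div_pos hs hden
          linarith
        have hd : HasDerivAt (fun s : ℝ => aI m * s + zI m) (aI m) x := by
          simpa using ((hasDerivAt_id x).const_mul (aI m)).add_const (zI m)
        have hq : HasDerivAt (fun s : ℝ => sI m / (aI m * s + zI m))
            ((0 * (aI m * x + zI m) - sI m * aI m) / (aI m * x + zI m)^2) x :=
          (hasDerivAt_const x (sI m)).div hd (ne_of_gt hden)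
        have hlog := ((hq.const_add 1).log (ne_of_gt hu)).const_mul (wI m)
        refine hlog.congr_deriv ?_
        have h1 : (aI m * x + zI m) ≠ 0 := ne_of_gt hden
        have h2 : (1 + sI m / (aI m * x + zI m)) ≠ 0 := ne_of_gt hu
        have h3 : (sI m + g m x) ≠ 0 := by positivity
        simp only [hg]
        field_simp
        ring
      have h3 : HasDerivAt (fun s : ℝ => L*(s-st)^2) (L*(2*(x-st))) x := by
        have := (((hasDerivAt_id x).sub_const st).pow 2).const_mul L
        simpa using this
      exact hsum.neg.add h3
    · intro x hx
      obtain ⟨hx0, hxM⟩ := hx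
      have hsum : HasDerivAt
          (fun s : ℝ => ∑ m ∈ I, wI m * (-(sI m * aI m) / ((sI m + g m s) * g m s)))
          (∑ m ∈ I, wI m *
            (sI m * (aI m)^2 * (sI m + 2 * g m x) / ((sI m + g m x) * g m x)^2)) x := by
        apply HasDerivAt.fun_sum
        intro m hm
        have ha := haI m hm; have hs := hsI m hm; have hz := hzI m hm
        have hden : 0 < g m x := by
          have : 0 ≤ aI m * x := mul_nonneg ha hx0
          simp only [hg]; linarith
        have hprod : 0 < (sI m + g m x) * g m x := by positivity
        have hd : HasDerivAt (fun s : ℝ => aI m * s + zI m) (aI m) x := by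
          simpa using ((hasDerivAt_id x).const_mul (aI m)).add_const (zI m)
        have hP : HasDerivAt (fun s : ℝ => (sI m + (aI m * s + zI m)) * (aI m * s + zI m))
            (aI m * (aI m * x + zI m) + (sI m + (aI m * x + zI m)) * aI m) x :=
          (hd.const_add (sI m)).mul hd
        have hden' : 0 < aI m * x + zI m := by simpa [hg] using hden
        have hq := (hasDerivAt_const x (-(sI m * aI m))).div hP
          (by simp only [hg] at hprod; exact ne_of_gt hprod)
        have hq2 := hq.const_mul (wI m)
        refine hq2.congr_deriv ?_
        have h1 : (aI m * x + zI m) ≠ 0 := ne_of_gt hden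
        have h3 : (sI m + (aI m * x + zI m)) ≠ 0 := by
          have : (0:ℝ) < sI m + (aI m * x + zI m) := by linarith [hden']
          exact ne_of_gt this
        simp only [hg]
        field_simp
        try ring
        try simp
      have h2 : HasDerivAt (fun s : ℝ => L*(2*(s-st))) (2*L) x := by
        have := (((hasDerivAt_id x).sub_const st).const_mul 2).const_mul L
        simpa [mul_comm] using this
      exact hsum.neg.add h2
    · intro x hx
      obtain ⟨hx0, hxM⟩ := hx
      have hterm : ∀ m ∈ I,
          2 * (wI m * sI m * (aI m) ^ 2 * (sI m + 2 * (aI m * M + zI m))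
            / (2 * ((sI m + aI m * M + zI m) * (aI m * M + zI m)) ^ 2))
          ≤ wI m * (sI m * (aI m)^2 * (sI m + 2 * g m x) / ((sI m + g m x) * g m x)^2) := by
        intro m hm
        have ha := haI m hm; have hs := hsI m hm; have hz := hzI m hm
        have hwm := hwI m hm
        have ht1 : 0 < aI m * x + zI m := by
          have : 0 ≤ aI m * x := mul_nonneg ha hx0
          linarith
        have ht2 : 0 < aI m * M + zI m := by
          have : 0 ≤ aI m * M := mul_nonneg ha hM.le
          linarith
        have h12 : aI m * x + zI m ≤ aI m * M + zI m := by
          have : aI m * x ≤ aI m * M := mul_le_mul_of_nonneg_left hxM ha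
          linarith
        have hkey := IASB2_key_mono (sI m) (aI m * x + zI m) (aI m * M + zI m) hs ht1 h12
        have hmul := mul_le_mul_of_nonneg_left hkey
          (mul_nonneg hwm.le (sq_nonneg (aI m)))
        calc 2 * (wI m * sI m * (aI m) ^ 2 * (sI m + 2 * (aI m * M + zI m))
              / (2 * ((sI m + aI m * M + zI m) * (aI m * M + zI m)) ^ 2))
            = wI m * (aI m)^2 * (sI m * (sI m + 2*(aI m * M + zI m))
              / ((sI m + (aI m * M + zI m)) * (aI m * M + zI m))^2) := by
              have h3 : ((sI m + aI m * M + zI m) * (aI m * M + zI m)) ≠ 0 := by positivity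
              have h4 : ((sI m + (aI m * M + zI m)) * (aI m * M + zI m)) ≠ 0 := by positivity
              field_simp
              ring
          _ ≤ wI m * (aI m)^2 * (sI m * (sI m + 2*(aI m * x + zI m))
              / ((sI m + (aI m * x + zI m)) * (aI m * x + zI m))^2) := hmul
          _ = wI m * (sI m * (aI m)^2 * (sI m + 2 * g m x) / ((sI m + g m x) * g m x)^2) := by
              simp only [hg]; ring
      have hsum := Finset.sum_le_sum hterm
      rw [← Finset.mul_sum, ← hLstar] at hsum
      have : 2 * L ≤ 2 * Lstar := by linarith
      linarith [le_trans this hsum]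
end

section
/- Lemma 3 (IASB3 is tighter than IASB1): In the per-user per-tone spectrum optimization setup, let q ∈ I be a reference user. Then for all s ∈ [0, M]: f(s) ≤ f^IASB3(s) ≤ f^IASB1(s). -/
/-- Key scalar inequality: convexity tangent bound for `x ↦ log(x+c) - log x`. -/
private lemma key_log (c u p : ℝ) (hc : 0 < c) (hu : 0 < u) (hp : 0 < p) :
    (u - p) * (1 / (p + c) - 1 / p) ≤
      (Real.log (u + c) - Real.log u) - (Real.log (p + c) - Real.log p) := by
  have hupc : 0 < u + c := by linarith
  have hppc : 0 < p + c := by linarith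
  have h1 : (Real.log (u + c) - Real.log u) - (Real.log (p + c) - Real.log p)
      = Real.log ((u + c) * p / (u * (p + c))) := by
    rw [Real.log_div (by positivity) (by positivity),
        Real.log_mul (by positivity) (by positivity),
        Real.log_mul (by positivity) (by positivity)]
    ring
  rw [h1]
  have h2 : Real.log (u * (p + c) / ((u + c) * p)) ≤ u * (p + c) / ((u + c) * p) - 1 :=
    Real.log_le_sub_one_of_pos (by positivity)
  have h3 : Real.log (u * (p + c) / ((u + c) * p))
      = - Real.log ((u + c) * p / (u * (p + c))) := by
    rw [← Real.log_inv]
    congr 1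
    field_simp
  rw [h3] at h2
  have h4 : 1 - u * (p + c) / ((u + c) * p) ≤ Real.log ((u + c) * p / (u * (p + c))) := by
    linarith
  refine le_trans ?_ h4
  have key : 1 - u * (p + c) / ((u + c) * p) - (u - p) * (1 / (p + c) - 1 / p)
      = c * (u - p) ^ 2 / ((p + c) * (p * (u + c))) := by
    field_simp
    ring
  nlinarith [div_nonneg (mul_nonneg hc.le (sq_nonneg (u - p)))
      (le_of_lt (by positivity : (0:ℝ) < (p + c) * (p * (u + c))))]

/-- Derivative of the crosstalk term. -/
private lemma hasDeriv_G (w a z c s : ℝ) (hz : 0 < a * s + z) (hc : 0 < c) :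
    HasDerivAt (fun x => w * Real.log (1 + c / (a * x + z)))
      (w * (a / (a * s + z + c) - a / (a * s + z))) s := by
  have hlin : HasDerivAt (fun x : ℝ => a * x + z) a s := by
    simpa using ((hasDerivAt_id s).const_mul a).add_const z
  have hdiv : HasDerivAt (fun x : ℝ => c / (a * x + z))
      ((0 * (a * s + z) - c * a) / (a * s + z) ^ 2) s :=
    (hasDerivAt_const s c).div hlin (ne_of_gt hz)
  have hinner : HasDerivAt (fun x : ℝ => 1 + c / (a * x + z))
      ((0 * (a * s + z) - c * a) / (a * s + z) ^ 2) s := hdiv.const_add 1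
  have hpos : 0 < 1 + c / (a * s + z) := by positivity
  have hlog := (Real.hasDerivAt_log (ne_of_gt hpos)).comp s hinner
  have := hlog.const_mul w
  refine this.congr_deriv ?_
  have h1 : a * s + z ≠ 0 := ne_of_gt hz
  have h2 : a * s + z + c ≠ 0 := by positivity
  field_simp
  ring

/-- Tangent line inequality for the convex crosstalk term. -/
private lemma tangent (w a z c st s : ℝ) (hw : 0 ≤ w) (ha : 0 ≤ a) (hz : 0 < z)
    (hc : 0 < c) (hst : 0 ≤ st) (hs : 0 ≤ s) :
    w * Real.log (1 + c / (a * st + z)) + w * (a / (a * st + z + c) - a / (a * st + z)) * (s - st)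
      ≤ w * Real.log (1 + c / (a * s + z)) := by
  set u := a * s + z with hu
  set p := a * st + z with hp
  have hup : 0 < u := by positivity
  have hpp : 0 < p := by positivity
  have hlog_u : Real.log (1 + c / u) = Real.log (u + c) - Real.log u := by
    rw [← Real.log_div (by positivity) (ne_of_gt hup)]
    congr 1
    field_simp
  have hlog_p : Real.log (1 + c / p) = Real.log (p + c) - Real.log p := by
    rw [← Real.log_div (by positivity) (ne_of_gt hpp)]
    congr 1
    field_simp
  have hk := key_log c u p hc hup hpp
  have hdelta : u - p = a * (s - st) := by simp [hu, hp]; ring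
  have hterm : (a / (p + c) - a / p) * (s - st) = (u - p) * (1 / (p + c) - 1 / p) := by
    rw [hdelta]; ring
  rw [hlog_u, hlog_p]
  calc w * (Real.log (p + c) - Real.log p) + w * (a / (p + c) - a / p) * (s - st)
      = w * ((Real.log (p + c) - Real.log p) + (u - p) * (1 / (p + c) - 1 / p)) := by
        rw [mul_assoc, hterm]; ring
    _ ≤ w * (Real.log (u + c) - Real.log u) := by
        apply mul_le_mul_of_nonneg_left _ hw
        linarith

/-- Lemma 3 (IASB3 is tighter than IASB1): in the per-user per-tone spectrum
optimization setup, with reference user `q ∈ I`, the IASB3 approximation upper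
bounds the true objective `f` on `[0, M]` and is itself upper bounded by the
IASB1 approximation. Here `f^X = f1_X + LIN(f − f1_X)` with `LIN` the
linearization at `s̃`. -/
theorem IASB3_tighter_than_IASB1
    {ι : Type*} (I : Finset ι)
    (M st w intn : ℝ) (wI aI sI zI : ι → ℝ)
    (hM : 0 < M) (hst : st ∈ Set.Icc 0 M)
    (hw : 0 < w) (hintn : 0 < intn)
    (hwI : ∀ m ∈ I, 0 < wI m) (haI : ∀ m ∈ I, 0 ≤ aI m)
    (hsI : ∀ m ∈ I, 0 < sI m) (hzI : ∀ m ∈ I, 0 < zI m)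
    (q : ι) (hq : q ∈ I)
    (f f1IASB1 f1IASB3 fIASB1 fIASB3 : ℝ → ℝ)
    (hf : f = fun s => -w * Real.log (1 + s / intn)
        - ∑ m ∈ I, wI m * Real.log (1 + sI m / (aI m * s + zI m)))
    (hf1IASB1 : f1IASB1 = fun s => -w * Real.log (1 + s / intn))
    (hf1IASB3 : f1IASB3 = fun s => -w * Real.log (1 + s / intn)
        - wI q * Real.log (1 + sI q / (aI q * s + zI q)))
    (hfIASB1 : fIASB1 = fun s => f1IASB1 s + (f st - f1IASB1 st)
        + deriv (fun x => f x - f1IASB1 x) st * (s - st))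
    (hfIASB3 : fIASB3 = fun s => f1IASB3 s + (f st - f1IASB3 st)
        + deriv (fun x => f x - f1IASB3 x) st * (s - st)) :
    ∀ s ∈ Set.Icc 0 M, f s ≤ fIASB3 s ∧ fIASB3 s ≤ fIASB1 s := by
  classical
  obtain ⟨hst0, hstM⟩ := hst
  set G : ι → ℝ → ℝ := fun m x => wI m * Real.log (1 + sI m / (aI m * x + zI m)) with hG
  set D : ι → ℝ := fun m =>
    wI m * (aI m / (aI m * st + zI m + sI m) - aI m / (aI m * st + zI m)) with hD
  -- derivative facts
  have hGderiv : ∀ m ∈ I, HasDerivAt (G m) (D m) st := by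
    intro m hm
    exact hasDeriv_G (wI m) (aI m) (zI m) (sI m) st
      (by have := haI m hm; have := hzI m hm; positivity) (hsI m hm)
  -- expressing the differences as sums
  have e1 : ∀ x, f x - f1IASB1 x = -∑ m ∈ I, G m x := by
    intro x; simp only [hf, hf1IASB1, hG]; ring
  have e3 : ∀ x, f x - f1IASB3 x = -∑ m ∈ I.erase q, G m x := by
    intro x
    have hsplit : G q x + ∑ m ∈ I.erase q, G m x = ∑ m ∈ I, G m x :=
      Finset.add_sum_erase I (fun m => G m x) hq
    simp only [hf, hf1IASB3, hG] at *
    linarith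
  have hd1 : deriv (fun x => f x - f1IASB1 x) st = -∑ m ∈ I, D m := by
    have : (fun x => f x - f1IASB1 x) = fun x => -∑ m ∈ I, G m x := funext e1
    rw [this]
    exact ((HasDerivAt.fun_sum (fun m hm => hGderiv m hm)).neg).deriv
  have hd3 : deriv (fun x => f x - f1IASB3 x) st = -∑ m ∈ I.erase q, D m := by
    have : (fun x => f x - f1IASB3 x) = fun x => -∑ m ∈ I.erase q, G m x := funext e3
    rw [this]
    exact ((HasDerivAt.fun_sum (fun m hm => hGderiv m (Finset.mem_of_mem_erase hm))).neg).deriv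
  intro s hs
  obtain ⟨hs0, hsM⟩ := hs
  -- termwise tangent inequality
  have hT : ∀ m ∈ I, G m st + D m * (s - st) ≤ G m s := by
    intro m hm
    exact tangent (wI m) (aI m) (zI m) (sI m) st s (hwI m hm).le (haI m hm) (hzI m hm)
      (hsI m hm) hst0 hs0
  constructor
  · -- f s ≤ fIASB3 s
    have hsum : ∑ m ∈ I.erase q, (G m st + D m * (s - st)) ≤ ∑ m ∈ I.erase q, G m s :=
      Finset.sum_le_sum fun m hm => hT m (Finset.mem_of_mem_erase hm)
    have hsum' : (∑ m ∈ I.erase q, G m st) + (∑ m ∈ I.erase q, D m) * (s - st)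
        ≤ ∑ m ∈ I.erase q, G m s := by
      rw [Finset.sum_mul] at *
      rw [← Finset.sum_add_distrib]
      exact hsum
    rw [hfIASB3]
    simp only [hd3]
    have h1 := e3 s
    have h2 := e3 st
    linarith
  · -- fIASB3 s ≤ fIASB1 s
    rw [hfIASB1, hfIASB3]
    simp only [hd1, hd3]
    have heq : ∀ x, f1IASB1 x - f1IASB3 x = G q x := by
      intro x; simp only [hf1IASB1, hf1IASB3, hG]; ring
    have hsplit : D q + ∑ m ∈ I.erase q, D m = ∑ m ∈ I, D m :=
      Finset.add_sum_erase I D hq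
    have hTq := hT q hq
    have h1 := heq s
    have h2 := heq st
    nlinarith [hTq, h1, h2, hsplit]
end

section
/- Lemma 4 (the IASB4 remainder lies below its tangent): In the per-user per-tone spectrum optimization setup, let q ∈ I and set x̃_q = s̃_q/int_q(s̃), α_q = x̃_q/(1 + x̃_q), c_q = w_q·(log(1 + x̃_q) − α_q·log(x̃_q)). Define f2_IASB4(s) = w_q·α_q·log(s̃_q/int_q(s)) + c_q − Σ_{m∈I} w_m·log(1 + s̃_m/int_m(s)). Then f2_IASB4 is upper bounded on [0, M] by its tangent line at s̃: f2_IASB4(s) ≤ f2_IASB4(s̃) + f2_IASB4′(s̃)·(s − s̃) for all s ∈ [0, M]. -/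
open Real Set Finset

lemma log_ge_one_sub_inv {y : ℝ} (hy : 0 < y) : 1 - 1/y ≤ Real.log y := by
  have h := Real.log_le_sub_one_of_pos (inv_pos.mpr hy)
  rw [Real.log_inv] at h
  have : (1:ℝ)/y = y⁻¹ := one_div y
  linarith

lemma tangent_convex_term {a z sm s st : ℝ} (hsm : 0 < sm)
    (hu : 0 < a * s + z) (hut : 0 < a * st + z) :
    Real.log (1 + sm / (a * st + z)) + -(sm * a) / ((a * st + z) * (a * st + z + sm)) * (s - st)
      ≤ Real.log (1 + sm / (a * s + z)) := by
  have h1 : (1 : ℝ) + sm / (a*s+z) = (a*s+z + sm)/(a*s+z) := by field_simp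
  have h2 : (1 : ℝ) + sm / (a*st+z) = (a*st+z + sm)/(a*st+z) := by field_simp
  have husm : (0:ℝ) < a*s+z+sm := by linarith
  have hutsm : (0:ℝ) < a*st+z+sm := by linarith
  rw [h1, h2, Real.log_div (ne_of_gt husm) (ne_of_gt hu),
      Real.log_div (ne_of_gt hutsm) (ne_of_gt hut)]
  have hy : 0 < (a*s+z+sm) * (a*st+z) / ((a*st+z+sm) * (a*s+z)) := by positivity
  have hlog := log_ge_one_sub_inv hy
  rw [Real.log_div (by positivity) (by positivity),
      Real.log_mul (by positivity) (by positivity),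
      Real.log_mul (by positivity) (by positivity)] at hlog
  have e1 : 1 - 1/((a*s+z+sm) * (a*st+z) / ((a*st+z+sm) * (a*s+z)))
      = sm*((a*st+z) - (a*s+z))/((a*s+z+sm)*(a*st+z)) := by
    field_simp
    ring
  have e2 : -(sm * a) / ((a*st+z) * (a*st+z + sm)) * (s - st)
      = sm*((a*st+z) - (a*s+z))/((a*st+z)*(a*st+z+sm)) := by
    field_simp
    ring
  have e3 : sm*((a*st+z) - (a*s+z))/((a*st+z)*(a*st+z+sm))
      ≤ sm*((a*st+z) - (a*s+z))/((a*s+z+sm)*(a*st+z)) := by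
    rw [div_le_div_iff₀ (by positivity) (by positivity)]
    nlinarith [mul_nonneg (mul_nonneg hsm.le hut.le) (sq_nonneg ((a*st+z) - (a*s+z)))]
  linarith

lemma scale_ineq {x xt : ℝ} (hx : 0 < x) (hxt : 0 < xt) :
    xt/(1+xt) * Real.log x - Real.log (1+x) ≤ xt/(1+xt) * Real.log xt - Real.log (1+xt) := by
  have h1 : (0:ℝ) < 1 + xt := by linarith
  have h1x : (0:ℝ) < 1 + x := by linarith
  have hα0 : 0 ≤ xt/(1+xt) := by positivity
  have hα1 : (0:ℝ) ≤ 1 - xt/(1+xt) := by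
    have : xt/(1+xt) ≤ 1 := by rw [div_le_one h1]; linarith
    linarith
  have ht : 0 < x / xt := by positivity
  have hconc := (strictConcaveOn_log_Ioi.concaveOn).2 (Set.mem_Ioi.mpr one_pos)
      (Set.mem_Ioi.mpr ht) hα1 hα0 (by ring)
  rw [smul_eq_mul, smul_eq_mul, smul_eq_mul, smul_eq_mul, Real.log_one] at hconc
  have harg : (1 - xt/(1+xt))*1 + (xt/(1+xt))*(x/xt) = (1+x)/(1+xt) := by
    field_simp
    ring
  rw [harg, Real.log_div (ne_of_gt h1x) (ne_of_gt h1),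
      Real.log_div (ne_of_gt hx) (ne_of_gt hxt)] at hconc
  nlinarith [hconc]

lemma hasDerivAt_affine (a z st : ℝ) : HasDerivAt (fun s : ℝ => a * s + z) a st := by
  simpa using ((hasDerivAt_id st).const_mul a).add_const z

lemma hasDerivAt_logterm {a z sm st : ℝ} (hsm : 0 < sm) (hut : 0 < a * st + z) :
    HasDerivAt (fun s => Real.log (1 + sm / (a * s + z)))
      (-(sm * a) / ((a * st + z) * (a * st + z + sm))) st := by
  have h2 : HasDerivAt (fun s => sm / (a * s + z))
      ((0 * (a*st+z) - sm * a) / (a*st+z)^2) st :=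
    (hasDerivAt_const st sm).div (hasDerivAt_affine a z st) (ne_of_gt hut)
  have hpos : 0 < sm / (a*st+z) := by positivity
  have hne : (1 : ℝ) + sm / (a*st+z) ≠ 0 := by linarith
  have h4 := (h2.const_add 1).log hne
  convert h4 using 1
  have hne1 : a*st+z ≠ 0 := ne_of_gt hut
  have hne2 : a*st+z+sm ≠ 0 := ne_of_gt (by linarith)
  field_simp
  ring

lemma hasDerivAt_qterm {a z sq st : ℝ} (hsq : 0 < sq) (hut : 0 < a * st + z) :
    HasDerivAt (fun s => Real.log (sq / (a * s + z))) (-a / (a * st + z)) st := by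
  have h2 : HasDerivAt (fun s => sq / (a * s + z))
      ((0 * (a*st+z) - sq * a) / (a*st+z)^2) st :=
    (hasDerivAt_const st sq).div (hasDerivAt_affine a z st) (ne_of_gt hut)
  have hpos : 0 < sq / (a*st+z) := by positivity
  have h4 := h2.log (ne_of_gt hpos)
  convert h4 using 1
  have hne1 : a*st+z ≠ 0 := ne_of_gt hut
  field_simp
  ring

/-- Lemma 4 (the IASB4 remainder lies below its tangent): in the per-user per-tone
spectrum optimization setup, with reference user `q ∈ I`, `x̃_q = s̃_q/int_q(s̃)`,
`α_q = x̃_q/(1 + x̃_q)` and `c_q = w_q·(log(1 + x̃_q) − α_q·log(x̃_q))`, the function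
`f2_IASB4(s) = w_q·α_q·log(s̃_q/int_q(s)) + c_q − Σ_{m∈I} w_m·log(1 + s̃_m/int_m(s))`
is upper bounded on `[0, M]` by its tangent line at `s̃`. -/
theorem IASB4_remainder_below_tangent
    {ι : Type*} (I : Finset ι)
    (M st w intn : ℝ) (wI aI sI zI : ι → ℝ)
    (hM : 0 < M) (hst : st ∈ Set.Icc 0 M)
    (hw : 0 < w) (hintn : 0 < intn)
    (hwI : ∀ m ∈ I, 0 < wI m) (haI : ∀ m ∈ I, 0 ≤ aI m)
    (hsI : ∀ m ∈ I, 0 < sI m) (hzI : ∀ m ∈ I, 0 < zI m)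
    (q : ι) (hq : q ∈ I)
    (xtq αq cq : ℝ)
    (hxtq : xtq = sI q / (aI q * st + zI q))
    (hαq : αq = xtq / (1 + xtq))
    (hcq : cq = wI q * (Real.log (1 + xtq) - αq * Real.log xtq))
    (f2IASB4 : ℝ → ℝ)
    (hf2 : f2IASB4 = fun s => wI q * αq * Real.log (sI q / (aI q * s + zI q)) + cq
        - ∑ m ∈ I, wI m * Real.log (1 + sI m / (aI m * s + zI m))) :
    ∀ s ∈ Set.Icc 0 M, f2IASB4 s ≤ f2IASB4 st + deriv f2IASB4 st * (s - st) := by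
  intro s hs
  obtain ⟨hs0, hsM⟩ := hs
  obtain ⟨hst0, hstM⟩ := hst
  have hwq := hwI q hq
  have hsq := hsI q hq
  have hutm : ∀ m ∈ I, 0 < aI m * st + zI m := fun m hm =>
    add_pos_of_nonneg_of_pos (mul_nonneg (haI m hm) hst0) (hzI m hm)
  have hum : ∀ m ∈ I, 0 < aI m * s + zI m := fun m hm =>
    add_pos_of_nonneg_of_pos (mul_nonneg (haI m hm) hs0) (hzI m hm)
  have hutq := hutm q hq
  have huq := hum q hq
  subst hf2
  have hD : HasDerivAt (fun s => wI q * αq * Real.log (sI q / (aI q * s + zI q)) + cq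
      - ∑ m ∈ I, wI m * Real.log (1 + sI m / (aI m * s + zI m)))
      (wI q * αq * (-(aI q) / (aI q * st + zI q))
        - ∑ m ∈ I, wI m * (-(sI m * aI m) / ((aI m * st + zI m) * (aI m * st + zI m + sI m)))) st :=
    (((hasDerivAt_qterm hsq hutq).const_mul (wI q * αq)).add_const cq).sub
      (HasDerivAt.fun_sum fun m hm => (hasDerivAt_logterm (hsI m hm) (hutm m hm)).const_mul (wI m))
  rw [hD.deriv]
  beta_reduce
  have hg : ∀ m ∈ I, 0 ≤ wI m * (Real.log (1 + sI m / (aI m * s + zI m))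
      - Real.log (1 + sI m / (aI m * st + zI m))
      - -(sI m * aI m) / ((aI m * st + zI m) * (aI m * st + zI m + sI m)) * (s - st)) := by
    intro m hm
    have h := tangent_convex_term (hsI m hm) (hum m hm) (hutm m hm)
    exact mul_nonneg (hwI m hm).le (by linarith)
  have hsum := Finset.single_le_sum hg hq
  have hsplit : ∑ m ∈ I, wI m * (Real.log (1 + sI m / (aI m * s + zI m))
      - Real.log (1 + sI m / (aI m * st + zI m))
      - -(sI m * aI m) / ((aI m * st + zI m) * (aI m * st + zI m + sI m)) * (s - st))
      = (∑ m ∈ I, wI m * Real.log (1 + sI m / (aI m * s + zI m)))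
        - (∑ m ∈ I, wI m * Real.log (1 + sI m / (aI m * st + zI m)))
        - (∑ m ∈ I, wI m * (-(sI m * aI m) / ((aI m * st + zI m) * (aI m * st + zI m + sI m)))) * (s - st) := by
    rw [Finset.sum_mul, ← Finset.sum_sub_distrib, ← Finset.sum_sub_distrib]
    exact Finset.sum_congr rfl fun m _ => by ring
  have hx : 0 < sI q / (aI q * s + zI q) := div_pos hsq huq
  have hxtpos : 0 < sI q / (aI q * st + zI q) := div_pos hsq hutq
  have hα' : αq = (sI q / (aI q * st + zI q)) / (1 + sI q / (aI q * st + zI q)) := by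
    rw [hαq, hxtq]
  have hL2 : αq * Real.log (sI q / (aI q * s + zI q)) - Real.log (1 + sI q / (aI q * s + zI q))
      ≤ αq * Real.log (sI q / (aI q * st + zI q)) - Real.log (1 + sI q / (aI q * st + zI q)) := by
    rw [hα']
    exact scale_ineq hx hxtpos
  have hne1 : aI q * st + zI q ≠ 0 := ne_of_gt hutq
  have hne2 : aI q * st + zI q + sI q ≠ 0 := ne_of_gt (by linarith)
  have hne3 : 1 + sI q / (aI q * st + zI q) ≠ 0 := ne_of_gt (by linarith [hxtpos])
  have hid : wI q * αq * (aI q / (aI q * st + zI q))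
      = wI q * (sI q * aI q / ((aI q * st + zI q) * (aI q * st + zI q + sI q))) := by
    rw [hα']
    field_simp
  have hid2 : wI q * αq * (aI q / (aI q * st + zI q)) * (s - st)
      = wI q * (sI q * aI q / ((aI q * st + zI q) * (aI q * st + zI q + sI q))) * (s - st) := by
    rw [hid]
  have hqineq : wI q * αq * Real.log (sI q / (aI q * s + zI q))
      - wI q * αq * Real.log (sI q / (aI q * st + zI q))
      - wI q * αq * (-(aI q) / (aI q * st + zI q)) * (s - st)
      ≤ wI q * (Real.log (1 + sI q / (aI q * s + zI q)) - Real.log (1 + sI q / (aI q * st + zI q))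
          - -(sI q * aI q) / ((aI q * st + zI q) * (aI q * st + zI q + sI q)) * (s - st)) := by
    have h := mul_le_mul_of_nonneg_left hL2 hwq.le
    have e : (wI q * αq * Real.log (sI q / (aI q * s + zI q))
      - wI q * αq * Real.log (sI q / (aI q * st + zI q))
      - wI q * αq * (-(aI q) / (aI q * st + zI q)) * (s - st))
      - (wI q * (Real.log (1 + sI q / (aI q * s + zI q)) - Real.log (1 + sI q / (aI q * st + zI q))
          - -(sI q * aI q) / ((aI q * st + zI q) * (aI q * st + zI q + sI q)) * (s - st)))
      = wI q * (αq * Real.log (sI q / (aI q * s + zI q)) - Real.log (1 + sI q / (aI q * s + zI q)))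
        - wI q * (αq * Real.log (sI q / (aI q * st + zI q)) - Real.log (1 + sI q / (aI q * st + zI q)))
        + (wI q * αq * (aI q / (aI q * st + zI q)) * (s - st)
          - wI q * (sI q * aI q / ((aI q * st + zI q) * (aI q * st + zI q + sI q))) * (s - st)) := by
      ring
    linarith [h, hid2, e]
  linarith [hsum, hsplit, hqineq]
end

section
/- Lemma 5 (IASB4 is less tight than IASB3 and tighter than IASB1): In the per-user per-tone spectrum optimization setup, let q ∈ I be a reference user. Then for all s ∈ [0, M]: f(s) ≤ f^IASB3(s) ≤ f^IASB4(s) ≤ f^IASB1(s). -/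
private lemma log_lb' {x : ℝ} (hx : 0 < x) : 1 - 1/x ≤ Real.log x := by
  have h := Real.log_le_sub_one_of_pos (show (0:ℝ) < x⁻¹ by positivity)
  rw [Real.log_inv] at h
  have : (1:ℝ)/x = x⁻¹ := one_div x
  linarith [this ▸ h]

private lemma lemB' {p y0 y1 : ℝ} (hp : 0 < p) (h0 : 0 < y0) (h1 : 0 < y1) :
    Real.log (1 + p/y0) + (-(p*(y1-y0))/((p+y0)*y0)) ≤ Real.log (1 + p/y1) := by
  have hp0 : 0 < p + y0 := by linarith
  have hp1 : 0 < p + y1 := by linarith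
  have e0 : 1 + p/y0 = (p+y0)/y0 := by field_simp; ring
  have e1 : 1 + p/y1 = (p+y1)/y1 := by field_simp; ring
  set r := ((p+y1)*y0)/((p+y0)*y1) with hr
  have hrpos : 0 < r := by positivity
  have hlr : 1 - 1/r ≤ Real.log r := log_lb' hrpos
  have hlog : Real.log r = Real.log (1 + p/y1) - Real.log (1 + p/y0) := by
    rw [e0, e1, hr, Real.log_div (by positivity) (by positivity),
      Real.log_div (ne_of_gt hp1) (ne_of_gt h1), Real.log_div (ne_of_gt hp0) (ne_of_gt h0),
      Real.log_mul (ne_of_gt hp1) (ne_of_gt h0), Real.log_mul (ne_of_gt hp0) (ne_of_gt h1)]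
    ring
  have key : -(p*(y1-y0))/((p+y0)*y0) ≤ 1 - 1/r := by
    have hid : 1 - 1/r - (-(p*(y1-y0))/((p+y0)*y0)) = p*(y1-y0)^2/((p+y1)*((p+y0)*y0)) := by
      rw [hr]; field_simp; ring
    nlinarith [sq_nonneg (y1-y0), mul_pos hp1 (mul_pos hp0 h0),
      div_nonneg (mul_nonneg hp.le (sq_nonneg (y1-y0))) (mul_pos hp1 (mul_pos hp0 h0)).le, hid]
  linarith [hlog ▸ hlr]

private lemma lemC' {x xt : ℝ} (hx : 0 < x) (hxt : 0 < xt) :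
    Real.log (1 + xt) + (xt/(1+xt)) * (Real.log x - Real.log xt) ≤ Real.log (1 + x) := by
  set α := xt/(1+xt) with hα
  have h1xt : (0:ℝ) < 1 + xt := by linarith
  have hα0 : 0 ≤ α := by positivity
  have hα1 : 0 ≤ 1 - α := by
    rw [hα]; rw [sub_nonneg, div_le_one h1xt]; linarith
  have hsum : α + (1 - α) = 1 := by ring
  have amgm := Real.geom_mean_le_arith_mean2_weighted hα0 hα1
    (le_of_lt (div_pos hx hxt)) zero_le_one hsum
  rw [Real.one_rpow, mul_one, mul_one] at amgm
  have key : (1+xt) * (x/xt)^α ≤ 1 + x := by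
    have h2 : (1+xt) * (x/xt)^α ≤ (1+xt) * (α*(x/xt) + (1-α)) :=
      mul_le_mul_of_nonneg_left amgm h1xt.le
    have h3 : (1+xt) * (α*(x/xt) + (1-α)) = 1 + x := by
      rw [hα]; field_simp; ring
    linarith
  have hlog := Real.log_le_log (by positivity) key
  rw [Real.log_mul (ne_of_gt h1xt) (ne_of_gt (Real.rpow_pos_of_pos (div_pos hx hxt) α)),
    Real.log_rpow (div_pos hx hxt), Real.log_div (ne_of_gt hx) (ne_of_gt hxt)] at hlog
  linarith

private lemma lemD' {y0 y1 : ℝ} (h0 : 0 < y0) (h1 : 0 < y1) :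
    Real.log y1 - Real.log y0 ≤ (y1 - y0)/y0 := by
  have h := Real.log_le_sub_one_of_pos (show (0:ℝ) < y1/y0 by positivity)
  rw [Real.log_div (ne_of_gt h1) (ne_of_gt h0)] at h
  have : y1/y0 - 1 = (y1-y0)/y0 := by field_simp
  linarith [this ▸ h]

private lemma gHasDeriv' (wm p a z st : ℝ) (hy : 0 < a*st+z) (hp : 0 < p) :
    HasDerivAt (fun s => wm * Real.log (1 + p / (a*s+z)))
      (-(wm*p*a/((a*st+z)*(p+(a*st+z))))) st := by
  have h1 : HasDerivAt (fun s : ℝ => a*s+z) a st := by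
    simpa using ((hasDerivAt_id st).const_mul a).add_const z
  have h2 : HasDerivAt (fun s => p/(a*s+z)) ((0*(a*st+z) - p*a)/(a*st+z)^2) st :=
    (hasDerivAt_const st p).div h1 (ne_of_gt hy)
  have hne : 1 + p/(a*st+z) ≠ 0 := by positivity
  have h5 := ((h2.const_add 1).log hne).const_mul wm
  refine h5.congr_deriv ?_
  field_simp
  ring

private lemma g4HasDeriv' (c p a z st : ℝ) (hy : 0 < a*st+z) (hp : 0 < p) :
    HasDerivAt (fun s => c * Real.log (p/(a*s+z))) (-(c*a/(a*st+z))) st := by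
  have h1 : HasDerivAt (fun s : ℝ => a*s+z) a st := by
    simpa using ((hasDerivAt_id st).const_mul a).add_const z
  have h2 : HasDerivAt (fun s => p/(a*s+z)) ((0*(a*st+z) - p*a)/(a*st+z)^2) st :=
    (hasDerivAt_const st p).div h1 (ne_of_gt hy)
  have hne : p/(a*st+z) ≠ 0 := by positivity
  have h5 := (h2.log hne).const_mul c
  refine h5.congr_deriv ?_
  field_simp
  ring

private lemma L0HasDeriv' (w intn st : ℝ) (hintn : 0 < intn) (hst : 0 ≤ st) :
    HasDerivAt (fun s => -w * Real.log (1 + s/intn)) (-w * ((1/intn)/(1+st/intn))) st := by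
  have h1 : HasDerivAt (fun s : ℝ => s/intn) (1/intn) st := by
    simpa using (hasDerivAt_id st).div_const intn
  have h2 := (h1.const_add 1).log (by positivity)
  exact h2.const_mul (-w)

set_option maxHeartbeats 1000000 in
/-- Lemma 5 (IASB4 is less tight than IASB3 and tighter than IASB1): in the
per-user per-tone spectrum optimization setup, with reference user `q ∈ I`, the
approximations satisfy `f ≤ f^IASB3 ≤ f^IASB4 ≤ f^IASB1` on `[0, M]`.
Here `f^X = f1_X + LIN(f − f1_X)` with `LIN` the linearization at `s̃`. -/
theorem IASB4_between_IASB3_and_IASB1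
    {ι : Type*} (I : Finset ι)
    (M st w intn : ℝ) (wI aI sI zI : ι → ℝ)
    (hM : 0 < M) (hst : st ∈ Set.Icc 0 M)
    (hw : 0 < w) (hintn : 0 < intn)
    (hwI : ∀ m ∈ I, 0 < wI m) (haI : ∀ m ∈ I, 0 ≤ aI m)
    (hsI : ∀ m ∈ I, 0 < sI m) (hzI : ∀ m ∈ I, 0 < zI m)
    (q : ι) (hq : q ∈ I)
    (xtq αq cq : ℝ)
    (hxtq : xtq = sI q / (aI q * st + zI q))
    (hαq : αq = xtq / (1 + xtq))
    (hcq : cq = wI q * (Real.log (1 + xtq) - αq * Real.log xtq))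
    (f f1IASB1 f1IASB3 f1IASB4 fIASB1 fIASB3 fIASB4 : ℝ → ℝ)
    (hf : f = fun s => -w * Real.log (1 + s / intn)
        - ∑ m ∈ I, wI m * Real.log (1 + sI m / (aI m * s + zI m)))
    (hf1IASB1 : f1IASB1 = fun s => -w * Real.log (1 + s / intn))
    (hf1IASB3 : f1IASB3 = fun s => -w * Real.log (1 + s / intn)
        - wI q * Real.log (1 + sI q / (aI q * s + zI q)))
    (hf1IASB4 : f1IASB4 = fun s => -w * Real.log (1 + s / intn)
        - wI q * αq * Real.log (sI q / (aI q * s + zI q)) - cq)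
    (hfIASB1 : fIASB1 = fun s => f1IASB1 s + (f st - f1IASB1 st)
        + deriv (fun x => f x - f1IASB1 x) st * (s - st))
    (hfIASB3 : fIASB3 = fun s => f1IASB3 s + (f st - f1IASB3 st)
        + deriv (fun x => f x - f1IASB3 x) st * (s - st))
    (hfIASB4 : fIASB4 = fun s => f1IASB4 s + (f st - f1IASB4 st)
        + deriv (fun x => f x - f1IASB4 x) st * (s - st)) :
    ∀ s ∈ Set.Icc 0 M,
      f s ≤ fIASB3 s ∧ fIASB3 s ≤ fIASB4 s ∧ fIASB4 s ≤ fIASB1 s := by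
  classical
  obtain ⟨hst0, hstM⟩ := hst
  subst hfIASB1 hfIASB3 hfIASB4 hf hf1IASB1 hf1IASB3 hf1IASB4
  intro s hs
  obtain ⟨hs0, hsM⟩ := hs
  have hy0 : ∀ m ∈ I, 0 < aI m * st + zI m := fun m hm => by
    have h1 := haI m hm; have h2 := hzI m hm; nlinarith
  have hy1 : ∀ m ∈ I, 0 < aI m * s + zI m := fun m hm => by
    have h1 := haI m hm; have h2 := hzI m hm; nlinarith
  have hyq0 : 0 < aI q * st + zI q := hy0 q hq
  have hyqs : 0 < aI q * s + zI q := hy1 q hq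
  have hpq : 0 < sI q := hsI q hq
  have hwq : 0 < wI q := hwI q hq
  have hxt : 0 < xtq := by rw [hxtq]; positivity
  have hαpos : 0 < αq := by rw [hαq]; positivity
  -- derivatives
  have hL0 := L0HasDeriv' w intn st hintn hst0
  set D0 := -w * ((1/intn)/(1+st/intn)) with hD0
  set δ : ι → ℝ :=
    fun m => -(wI m * sI m * aI m/((aI m*st+zI m)*(sI m+(aI m*st+zI m)))) with hδ
  have hgm : ∀ m ∈ I,
      HasDerivAt (fun s => wI m * Real.log (1 + sI m/(aI m*s+zI m))) (δ m) st :=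
    fun m hm => gHasDeriv' (wI m) (sI m) (aI m) (zI m) st (hy0 m hm) (hsI m hm)
  have hSum : HasDerivAt (fun s => ∑ m ∈ I, wI m * Real.log (1 + sI m/(aI m*s+zI m)))
      (∑ m ∈ I, δ m) st := HasDerivAt.fun_sum hgm
  have Hf : HasDerivAt (fun s => -w * Real.log (1 + s / intn)
      - ∑ m ∈ I, wI m * Real.log (1 + sI m / (aI m * s + zI m)))
      (D0 - ∑ m ∈ I, δ m) st := hL0.sub hSum
  have H1 : HasDerivAt (fun s => -w * Real.log (1 + s / intn)) D0 st := hL0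
  have H3 : HasDerivAt (fun s => -w * Real.log (1 + s / intn)
      - wI q * Real.log (1 + sI q / (aI q * s + zI q))) (D0 - δ q) st :=
    hL0.sub (hgm q hq)
  set ε := wI q * αq * aI q / (aI q * st + zI q) with hε
  have H4 : HasDerivAt (fun s => -w * Real.log (1 + s / intn)
      - wI q * αq * Real.log (sI q / (aI q * s + zI q)) - cq) (D0 - -ε) st := by
    have h4 := g4HasDeriv' (wI q * αq) (sI q) (aI q) (zI q) st hyq0 hpq
    have h5 := (hL0.sub h4).sub_const cq
    exact h5
  have D3d : deriv (fun x => (-w * Real.log (1 + x / intn)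
        - ∑ m ∈ I, wI m * Real.log (1 + sI m / (aI m * x + zI m)))
      - (-w * Real.log (1 + x / intn)
        - wI q * Real.log (1 + sI q / (aI q * x + zI q)))) st
      = (D0 - ∑ m ∈ I, δ m) - (D0 - δ q) := (Hf.sub H3).deriv
  have D1d : deriv (fun x => (-w * Real.log (1 + x / intn)
        - ∑ m ∈ I, wI m * Real.log (1 + sI m / (aI m * x + zI m)))
      - (-w * Real.log (1 + x / intn))) st
      = (D0 - ∑ m ∈ I, δ m) - D0 := (Hf.sub H1).deriv
  have D4d : deriv (fun x => (-w * Real.log (1 + x / intn)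
        - ∑ m ∈ I, wI m * Real.log (1 + sI m / (aI m * x + zI m)))
      - (-w * Real.log (1 + x / intn)
        - wI q * αq * Real.log (sI q / (aI q * x + zI q)) - cq)) st
      = (D0 - ∑ m ∈ I, δ m) - (D0 - -ε) := (Hf.sub H4).deriv
  clear_value D0 δ ε
  refine ⟨?_, ?_, ?_⟩
  · -- f ≤ fIASB3
    simp only []
    rw [D3d]
    rw [← Finset.sum_erase_add I
        (fun m => wI m * Real.log (1 + sI m / (aI m * s + zI m))) hq,
      ← Finset.sum_erase_add I
        (fun m => wI m * Real.log (1 + sI m / (aI m * st + zI m))) hq,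
      ← Finset.sum_erase_add I δ hq]
    have key : ∑ m ∈ I.erase q,
        (wI m * Real.log (1 + sI m/(aI m*st+zI m)) + δ m * (s - st))
        ≤ ∑ m ∈ I.erase q, wI m * Real.log (1 + sI m/(aI m*s+zI m)) := by
      refine Finset.sum_le_sum fun m hm => ?_
      have hmI := Finset.mem_of_mem_erase hm
      have hB := lemB' (hsI m hmI) (hy0 m hmI) (hy1 m hmI)
      have hmul := mul_le_mul_of_nonneg_left hB (le_of_lt (hwI m hmI))
      rw [mul_add] at hmul
      have heq : wI m * (-(sI m*((aI m*s+zI m) - (aI m*st+zI m)))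
            /((sI m+(aI m*st+zI m))*(aI m*st+zI m))) = δ m * (s - st) := by
        simp only [hδ]
        have hA : (aI m*st+zI m) ≠ 0 := ne_of_gt (hy0 m hmI)
        have hBne : (sI m + (aI m*st+zI m)) ≠ 0 :=
          ne_of_gt (add_pos (hsI m hmI) (hy0 m hmI))
        field_simp
        ring
      linarith
    rw [Finset.sum_add_distrib, ← Finset.sum_mul] at key
    linarith
  · -- fIASB3 ≤ fIASB4
    simp only []
    rw [D3d, D4d]
    have hδε : δ q * (s - st) + ε * (s - st) = 0 := by
      have h : δ q + ε = 0 := by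
        simp only [hδ, hε, hαq, hxtq]
        have h1 : aI q * st + zI q ≠ 0 := ne_of_gt hyq0
        have h2 : sI q + (aI q * st + zI q) ≠ 0 := ne_of_gt (add_pos hpq hyq0)
        have h3 : 1 + sI q/(aI q*st+zI q) ≠ 0 := by
          have := div_pos hpq hyq0; intro hc; linarith
        field_simp
        ring
      rw [← add_mul, h, zero_mul]
    have hα' : αq = (sI q/(aI q*st+zI q))/(1+(sI q/(aI q*st+zI q))) := by
      rw [hαq, hxtq]
    have C := lemC' (div_pos hpq hyqs) (div_pos hpq hyq0)
    rw [← hα'] at C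
    have C2 := mul_le_mul_of_nonneg_left C hwq.le
    rw [mul_add] at C2
    linarith [C2, hδε]
  · -- fIASB4 ≤ fIASB1
    simp only []
    rw [D4d, D1d]
    have e1 : Real.log (sI q/(aI q*s+zI q))
        = Real.log (sI q) - Real.log (aI q*s+zI q) :=
      Real.log_div (ne_of_gt hpq) (ne_of_gt hyqs)
    have e0 : Real.log (sI q/(aI q*st+zI q))
        = Real.log (sI q) - Real.log (aI q*st+zI q) :=
      Real.log_div (ne_of_gt hpq) (ne_of_gt hyq0)
    have hD := lemD' hyq0 hyqs
    have hεeq : ε * (s - st)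
        = wI q * αq * (((aI q*s+zI q) - (aI q*st+zI q))/(aI q*st+zI q)) := by
      rw [hε]
      have h1 : aI q * st + zI q ≠ 0 := ne_of_gt hyq0
      field_simp
      ring
    have h7 : Real.log (sI q/(aI q*st+zI q)) - Real.log (sI q/(aI q*s+zI q))
        ≤ ((aI q*s+zI q) - (aI q*st+zI q))/(aI q*st+zI q) := by
      rw [e1, e0]; linarith [hD]
    have h8 := mul_le_mul_of_nonneg_left h7 (mul_nonneg hwq.le hαpos.le)
    rw [mul_sub] at h8
    linarith [h8, hεeq]
end

section
/- Lemma 7, first part (IASB10 is tighter than IASB5, hence than IASB4, IASB1 and CA-DSB): In the per-user per-tone spectrum optimization setup, let q, t ∈ I be two distinct reference users. Then for all s ∈ [0, M]: f(s) ≤ f^IASB10(s) ≤ f^IASB5(s). -/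
open Real Finset

lemma aux_tangent_log {x xt : ℝ} (hx : 0 < x) (hxt : 0 < xt) :
    xt / (1 + xt) * Real.log x - Real.log (1 + x) ≤
      xt / (1 + xt) * Real.log xt - Real.log (1 + xt) := by
  have h1xt : (0:ℝ) < 1 + xt := by linarith
  have h1x : (0:ℝ) < 1 + x := by linarith
  set α : ℝ := xt / (1 + xt) with hα
  have hα0 : 0 ≤ α := by positivity
  have hα1 : α ≤ 1 := by rw [hα, div_le_one h1xt]; linarith
  have hr : (0:ℝ) < x / xt := by positivity
  have key := strictConcaveOn_log_Ioi.concaveOn.2 (Set.mem_Ioi.mpr one_pos)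
      (Set.mem_Ioi.mpr hr) (by linarith : (0:ℝ) ≤ 1 - α) hα0 (by ring)
  simp only [smul_eq_mul, Real.log_one, mul_one, mul_zero, add_zero, zero_add] at key
  have hcomb : 1 - α + α * (x / xt) = (1 + x) / (1 + xt) := by
    rw [hα]; field_simp; ring
  rw [hcomb, Real.log_div h1x.ne' h1xt.ne', Real.log_div hx.ne' hxt.ne'] at key
  nlinarith [key]

/-- derivative of `x ↦ log (sm / (am * x + zm))` -/
lemma aux_hasDerivAt_log_div {sm am zm st : ℝ} (hs : sm ≠ 0)
    (hL : am * st + zm ≠ 0) :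
    HasDerivAt (fun x => Real.log (sm / (am * x + zm))) (-am / (am * st + zm)) st := by
  have hden : HasDerivAt (fun x : ℝ => am * x + zm) am st := by
    simpa using ((hasDerivAt_id st).const_mul am).add_const zm
  have h := ((hasDerivAt_const st sm).fun_div hden hL).log (div_ne_zero hs hL)
  convert h using 1
  field_simp
  ring

/-- derivative of `x ↦ log (1 + sm / (am * x + zm))` -/
lemma aux_hasDerivAt_log_one_add_div {sm am zm st : ℝ} (hs : 0 < sm)
    (hL : 0 < am * st + zm) :
    HasDerivAt (fun x => Real.log (1 + sm / (am * x + zm)))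
      (am / (am * st + zm + sm) - am / (am * st + zm)) st := by
  have hden : HasDerivAt (fun x : ℝ => am * x + zm) am st := by
    simpa using ((hasDerivAt_id st).const_mul am).add_const zm
  have hne : (1 + sm / (am * st + zm)) ≠ 0 := by positivity
  have h := (((hasDerivAt_const st sm).fun_div hden hL.ne').const_add 1).log hne
  convert h using 1
  have h2 : am * st + zm + sm ≠ 0 := by positivity
  field_simp
  ring

/-- Lemma 7, first part (IASB10 is tighter than IASB5): in the per-user per-tone
spectrum optimization setup, with two distinct reference users `q, t ∈ I`, the
approximations satisfy `f ≤ f^IASB10 ≤ f^IASB5` on `[0, M]`.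
Here `f^X = f1_X + LIN(f − f1_X)` with `LIN` the linearization at `s̃`. -/
theorem IASB10_tighter_than_IASB5
    {ι : Type*} (I : Finset ι)
    (M st w intn : ℝ) (wI aI sI zI : ι → ℝ)
    (hM : 0 < M) (hst : st ∈ Set.Icc 0 M)
    (hw : 0 < w) (hintn : 0 < intn)
    (hwI : ∀ m ∈ I, 0 < wI m) (haI : ∀ m ∈ I, 0 ≤ aI m)
    (hsI : ∀ m ∈ I, 0 < sI m) (hzI : ∀ m ∈ I, 0 < zI m)
    (q t : ι) (hq : q ∈ I) (ht : t ∈ I) (hqt : q ≠ t)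
    (xI αI cI : ι → ℝ)
    (hxI : ∀ m ∈ I, xI m = sI m / (aI m * st + zI m))
    (hαI : ∀ m ∈ I, αI m = xI m / (1 + xI m))
    (hcI : ∀ m ∈ I, cI m = wI m * (Real.log (1 + xI m) - αI m * Real.log (xI m)))
    (f f1IASB5 f1IASB10 fIASB5 fIASB10 : ℝ → ℝ)
    (hf : f = fun s => -w * Real.log (1 + s / intn)
        - ∑ m ∈ I, wI m * Real.log (1 + sI m / (aI m * s + zI m)))
    (hf1IASB5 : f1IASB5 = fun s => -w * Real.log (1 + s / intn)
        - (wI q * αI q * Real.log (sI q / (aI q * s + zI q)) + cI q)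
        - (wI t * αI t * Real.log (sI t / (aI t * s + zI t)) + cI t))
    (hf1IASB10 : f1IASB10 = fun s => -w * Real.log (1 + s / intn)
        - ∑ m ∈ I, (wI m * αI m * Real.log (sI m / (aI m * s + zI m)) + cI m))
    (hfIASB5 : fIASB5 = fun s => f1IASB5 s + (f st - f1IASB5 st)
        + deriv (fun x => f x - f1IASB5 x) st * (s - st))
    (hfIASB10 : fIASB10 = fun s => f1IASB10 s + (f st - f1IASB10 st)
        + deriv (fun x => f x - f1IASB10 x) st * (s - st)) :
    ∀ s ∈ Set.Icc 0 M, f s ≤ fIASB10 s ∧ fIASB10 s ≤ fIASB5 s := by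
  classical
  have hst0 : 0 ≤ st := hst.1
  -- positivity facts
  have hL : ∀ m ∈ I, ∀ x : ℝ, 0 ≤ x → 0 < aI m * x + zI m := by
    intro m hm x hx
    have := haI m hm; have := hzI m hm
    nlinarith
  have hLst : ∀ m ∈ I, 0 < aI m * st + zI m := fun m hm => hL m hm st hst0
  have hxpos : ∀ m ∈ I, 0 < xI m := by
    intro m hm; rw [hxI m hm]; exact div_pos (hsI m hm) (hLst m hm)
  have hα' : ∀ m ∈ I, αI m = sI m / (aI m * st + zI m + sI m) := by
    intro m hm
    have h1 := hLst m hm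
    have h2 := hsI m hm
    rw [hαI m hm, hxI m hm]
    field_simp
  have hαpos : ∀ m ∈ I, 0 < αI m := by
    intro m hm
    rw [hα' m hm]
    have := hLst m hm; have := hsI m hm; positivity
  -- the per-user difference functions ψ m = H m - G m
  -- derivative of ψ m at st is 0
  have hψd : ∀ m ∈ I, HasDerivAt (fun x =>
      wI m * αI m * Real.log (sI m / (aI m * x + zI m)) + cI m
        - wI m * Real.log (1 + sI m / (aI m * x + zI m))) 0 st := by
    intro m hm
    have h1 := aux_hasDerivAt_log_div (sm := sI m) (am := aI m) (zm := zI m) (st := st)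
      (hsI m hm).ne' (hLst m hm).ne'
    have h2 := aux_hasDerivAt_log_one_add_div (sm := sI m) (am := aI m) (zm := zI m) (st := st)
      (hsI m hm) (hLst m hm)
    have h := ((h1.const_mul (wI m * αI m)).add_const (cI m)).fun_sub (h2.const_mul (wI m))
    refine h.congr_deriv ?_
    rw [hα' m hm]
    have hne1 := (hLst m hm).ne'
    have hne2 : aI m * st + zI m + sI m ≠ 0 := by
      have := hLst m hm; have := hsI m hm; positivity
    field_simp
    ring
  -- derivative of H m at st
  have hHd : ∀ m ∈ I, HasDerivAt (fun x =>
      wI m * αI m * Real.log (sI m / (aI m * x + zI m)) + cI m)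
      (-(wI m * αI m * aI m / (aI m * st + zI m))) st := by
    intro m hm
    have h1 := aux_hasDerivAt_log_div (sm := sI m) (am := aI m) (zm := zI m) (st := st)
      (hsI m hm).ne' (hLst m hm).ne'
    have h := (h1.const_mul (wI m * αI m)).add_const (cI m)
    refine h.congr_deriv ?_
    ring
  -- ψ m vanishes at st
  have hψst : ∀ m ∈ I,
      wI m * αI m * Real.log (sI m / (aI m * st + zI m)) + cI m
        - wI m * Real.log (1 + sI m / (aI m * st + zI m)) = 0 := by
    intro m hm
    rw [← hxI m hm, hcI m hm]
    ring
  -- ψ m ≤ 0 on [0, M]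
  have hψle : ∀ m ∈ I, ∀ x : ℝ, 0 ≤ x →
      wI m * αI m * Real.log (sI m / (aI m * x + zI m)) + cI m
        - wI m * Real.log (1 + sI m / (aI m * x + zI m)) ≤ 0 := by
    intro m hm x hx
    have hxs : 0 < sI m / (aI m * x + zI m) := div_pos (hsI m hm) (hL m hm x hx)
    have key := aux_tangent_log hxs (hxpos m hm)
    rw [hcI m hm, hαI m hm]
    nlinarith [hwI m hm, key]
  -- pointwise identity for f - f1IASB10
  have hfe10 : (fun x => f x - f1IASB10 x) = fun x => ∑ m ∈ I,
      (wI m * αI m * Real.log (sI m / (aI m * x + zI m)) + cI m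
        - wI m * Real.log (1 + sI m / (aI m * x + zI m))) := by
    funext x
    simp only [hf, hf1IASB10]
    rw [Finset.sum_sub_distrib]
    ring
  have hderiv10 : HasDerivAt (fun x => f x - f1IASB10 x) 0 st := by
    rw [hfe10]
    have := HasDerivAt.fun_sum (fun m hm => hψd m hm)
    simpa using this
  have hval10 : f st - f1IASB10 st = 0 := by
    have := congrFun hfe10 st
    rw [this]
    exact Finset.sum_eq_zero hψst
  -- split of sums over I
  have ht' : t ∈ I.erase q := Finset.mem_erase.2 ⟨Ne.symm hqt, ht⟩
  have hsplit : ∀ F : ι → ℝ, ∑ m ∈ I, F m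
      = F q + F t + ∑ m ∈ (I.erase q).erase t, F m := by
    intro F
    rw [← Finset.add_sum_erase _ F hq, ← Finset.add_sum_erase _ F ht', add_assoc]
  have hJI : ∀ m ∈ (I.erase q).erase t, m ∈ I := by
    intro m hm
    exact Finset.mem_of_mem_erase (Finset.mem_of_mem_erase hm)
  -- pointwise identity for f - f1IASB5
  have hfe5 : (fun x => f x - f1IASB5 x) = fun x => (∑ m ∈ I,
      (wI m * αI m * Real.log (sI m / (aI m * x + zI m)) + cI m
        - wI m * Real.log (1 + sI m / (aI m * x + zI m))))
      - ∑ m ∈ (I.erase q).erase t,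
        (wI m * αI m * Real.log (sI m / (aI m * x + zI m)) + cI m) := by
    funext x
    simp only [hf, hf1IASB5]
    rw [Finset.sum_sub_distrib,
      hsplit (fun m => wI m * αI m * Real.log (sI m / (aI m * x + zI m)) + cI m)]
    ring
  have hderiv5 : HasDerivAt (fun x => f x - f1IASB5 x)
      (∑ m ∈ (I.erase q).erase t, wI m * αI m * aI m / (aI m * st + zI m)) st := by
    rw [hfe5]
    have h1 := HasDerivAt.fun_sum (fun m hm => hψd m hm)
    have h2 := HasDerivAt.fun_sum (fun m (hm : m ∈ (I.erase q).erase t) => hHd m (hJI m hm))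
    have h3 := h1.fun_sub h2
    refine h3.congr_deriv ?_
    simp [Finset.sum_neg_distrib]
  -- main goal
  intro s hs
  have hs0 : 0 ≤ s := hs.1
  constructor
  · -- f s ≤ fIASB10 s
    simp only [hfIASB10]
    rw [hderiv10.deriv, hval10]
    have h1 : f s - f1IASB10 s ≤ 0 := by
      rw [congrFun hfe10 s]
      exact Finset.sum_nonpos (fun m hm => hψle m hm s hs0)
    linarith
  · -- fIASB10 s ≤ fIASB5 s
    simp only [hfIASB5, hfIASB10]
    rw [hderiv10.deriv, hderiv5.deriv, hval10]
    have hfst : f st = f1IASB10 st := by linarith [hval10]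
    rw [hfst]
    -- tangent inequality for each H m
    have htan : ∀ m ∈ (I.erase q).erase t,
        0 ≤ (wI m * αI m * Real.log (sI m / (aI m * s + zI m)) + cI m)
          - (wI m * αI m * Real.log (sI m / (aI m * st + zI m)) + cI m)
          + (wI m * αI m * aI m / (aI m * st + zI m)) * (s - st) := by
      intro m hmJ
      have hm := hJI m hmJ
      have hLs := hL m hm s hs0
      have hLt := hLst m hm
      have hwα : 0 ≤ wI m * αI m := le_of_lt (mul_pos (hwI m hm) (hαpos m hm))
      have hlog : Real.log (aI m * s + zI m) - Real.log (aI m * st + zI m)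
          ≤ (aI m * s + zI m) / (aI m * st + zI m) - 1 := by
        have h := Real.log_le_sub_one_of_pos (div_pos hLs hLt)
        rwa [Real.log_div hLs.ne' hLt.ne'] at h
      have hfrac : (aI m * s + zI m) / (aI m * st + zI m) - 1
          = aI m * (s - st) / (aI m * st + zI m) := by
        field_simp
        ring
      have hX : 0 ≤ wI m * αI m * ((Real.log (aI m * st + zI m) - Real.log (aI m * s + zI m))
          + aI m * (s - st) / (aI m * st + zI m)) := by
        apply mul_nonneg hwα
        rw [← hfrac]
        linarith
      have heq : (wI m * αI m * Real.log (sI m / (aI m * s + zI m)) + cI m)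
          - (wI m * αI m * Real.log (sI m / (aI m * st + zI m)) + cI m)
          + (wI m * αI m * aI m / (aI m * st + zI m)) * (s - st)
          = wI m * αI m * ((Real.log (aI m * st + zI m) - Real.log (aI m * s + zI m))
            + aI m * (s - st) / (aI m * st + zI m)) := by
        rw [Real.log_div (hsI m hm).ne' hLs.ne', Real.log_div (hsI m hm).ne' hLt.ne']
        ring
      linarith [hX, heq]
    have hsum : 0 ≤ ∑ m ∈ (I.erase q).erase t,
        ((wI m * αI m * Real.log (sI m / (aI m * s + zI m)) + cI m)
          - (wI m * αI m * Real.log (sI m / (aI m * st + zI m)) + cI m)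
          + (wI m * αI m * aI m / (aI m * st + zI m)) * (s - st)) :=
      Finset.sum_nonneg htan
    rw [Finset.sum_add_distrib, Finset.sum_sub_distrib, ← Finset.sum_mul] at hsum
    simp only [hf1IASB5, hf1IASB10]
    rw [hsplit (fun m => wI m * αI m * Real.log (sI m / (aI m * s + zI m)) + cI m),
      hsplit (fun m => wI m * αI m * Real.log (sI m / (aI m * st + zI m)) + cI m)]
    linarith [hsum]
end

section
/- Lemma 7, second part (IASB10 is tighter than SCALE): In the per-user per-tone spectrum optimization setup, assume additionally s̃ > 0. Then for all s ∈ (0, M]: f(s) ≤ f^IASB10(s) ≤ f^SCALE(s). -/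
lemma key_log_s14 (t x : ℝ) (ht : 0 < t) (hx : 0 < x) :
    Real.log (1 + t) - t / (1 + t) * Real.log t ≤
      Real.log (1 + x) - t / (1 + t) * Real.log x := by
  have h1t : (0:ℝ) < 1 + t := by linarith
  set α := t / (1 + t) with hα
  have hderiv : ∀ y : ℝ, 0 < y →
      HasDerivAt (fun y => Real.log (1 + y) - α * Real.log y)
        (1 / (1 + y) - α * (1 / y)) y := by
    intro y hy
    have h1 : HasDerivAt (fun y : ℝ => 1 + y) 1 y := (hasDerivAt_id y).const_add 1
    have h2 : HasDerivAt (fun y : ℝ => Real.log (1 + y)) (1 / (1 + y)) y := by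
      have := (Real.hasDerivAt_log (by linarith : (1:ℝ) + y ≠ 0)).comp y h1
      exact this.congr_deriv (by simp [one_div])
    have h3 : HasDerivAt (fun y : ℝ => α * Real.log y) (α * (1 / y)) y := by
      simpa [one_div] using (Real.hasDerivAt_log hy.ne').const_mul α
    exact h2.sub h3
  set h : ℝ → ℝ := fun y => Real.log (1 + y) - α * Real.log y with hh
  rcases le_total t x with hle | hle
  · have mono : MonotoneOn h (Set.Icc t x) := by
      apply monotoneOn_of_deriv_nonneg (convex_Icc t x)
      · intro y hy
        exact (hderiv y (lt_of_lt_of_le ht hy.1)).differentiableAt.continuousAt.continuousWithinAt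
      · intro y hy
        rw [interior_Icc] at hy
        exact (hderiv y (lt_trans ht hy.1)).differentiableAt.differentiableWithinAt
      · intro y hy
        rw [interior_Icc] at hy
        have hy0 : 0 < y := lt_trans ht hy.1
        rw [(hderiv y hy0).deriv]
        rw [sub_nonneg, hα, div_mul_div_comm, mul_one]
        rw [div_le_div_iff₀ (by positivity) (by linarith)]
        nlinarith [hy.1.le]
    exact mono (Set.left_mem_Icc.2 hle) (Set.right_mem_Icc.2 hle) hle
  · have anti : AntitoneOn h (Set.Icc x t) := by
      apply antitoneOn_of_deriv_nonpos (convex_Icc x t)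
      · intro y hy
        exact (hderiv y (lt_of_lt_of_le hx hy.1)).differentiableAt.continuousAt.continuousWithinAt
      · intro y hy
        rw [interior_Icc] at hy
        exact (hderiv y (lt_trans hx hy.1)).differentiableAt.differentiableWithinAt
      · intro y hy
        rw [interior_Icc] at hy
        have hy0 : 0 < y := lt_trans hx hy.1
        rw [(hderiv y hy0).deriv]
        rw [sub_nonpos, hα, div_mul_div_comm, mul_one]
        rw [div_le_div_iff₀ (by linarith) (by positivity)]
        nlinarith [hy.2.le]
    exact anti (Set.left_mem_Icc.2 hle) (Set.right_mem_Icc.2 hle) hle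

lemma hasDerivAt_den (A Z s : ℝ) : HasDerivAt (fun x => A * x + Z) A s := by
  simpa using ((hasDerivAt_id s).const_mul A).add_const Z

lemma hasDerivAt_logfrac (S A Z s : ℝ) (hS : 0 < S) (hd : 0 < A * s + Z) :
    HasDerivAt (fun x => Real.log (S / (A * x + Z))) (-(A / (A * s + Z))) s := by
  have h2 : HasDerivAt (fun x => S / (A * x + Z)) ((0 * (A * s + Z) - S * A) / (A * s + Z) ^ 2) s :=
    (hasDerivAt_const s S).div (hasDerivAt_den A Z s) hd.ne'
  have h3 := (Real.hasDerivAt_log (by positivity : S / (A * s + Z) ≠ 0)).comp s h2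
  refine h3.congr_deriv (Eq.symm ?_)
  field_simp
  ring

lemma hasDerivAt_log1frac (S A Z s : ℝ) (hS : 0 < S) (hd : 0 < A * s + Z) :
    HasDerivAt (fun x => Real.log (1 + S / (A * x + Z)))
      (-(S * A) / ((A * s + Z) * (A * s + Z + S))) s := by
  have h2 : HasDerivAt (fun x => 1 + S / (A * x + Z)) ((0 * (A * s + Z) - S * A) / (A * s + Z) ^ 2) s :=
    ((hasDerivAt_const s S).div (hasDerivAt_den A Z s) hd.ne').const_add 1
  have hne : 1 + S / (A * s + Z) ≠ 0 := by positivity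
  have h3 := (Real.hasDerivAt_log hne).comp s h2
  refine h3.congr_deriv (Eq.symm ?_)
  rw [inv_mul_eq_div, div_eq_div_iff (by positivity) (by positivity)]
  field_simp
  ring

lemma hasDerivAt_log1div (intn s : ℝ) (hintn : 0 < intn) (hs : 0 < s) :
    HasDerivAt (fun x => Real.log (1 + x / intn)) (1 / (intn + s)) s := by
  have h1 : HasDerivAt (fun x : ℝ => 1 + x / intn) (1 / intn) s := by
    simpa using ((hasDerivAt_id s).div_const intn).const_add 1
  have hne : 1 + s / intn ≠ 0 := by positivity
  have h3 := (Real.hasDerivAt_log hne).comp s h1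
  refine h3.congr_deriv (Eq.symm ?_)
  field_simp

lemma hasDerivAt_logdiv (intn s : ℝ) (hintn : 0 < intn) (hs : 0 < s) :
    HasDerivAt (fun x => Real.log (x / intn)) (1 / s) s := by
  have h1 : HasDerivAt (fun x : ℝ => x / intn) (1 / intn) s := by
    simpa using (hasDerivAt_id s).div_const intn
  have hne : s / intn ≠ 0 := by positivity
  have h3 := (Real.hasDerivAt_log hne).comp s h1
  refine h3.congr_deriv (Eq.symm ?_)
  field_simp

/-- Lemma 7, second part (IASB10 is tighter than SCALE): in the per-user per-tone
spectrum optimization setup, assuming additionally `s̃ > 0`, the approximations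
satisfy `f ≤ f^IASB10 ≤ f^SCALE` on `(0, M]`.
Here `f^X = f1_X + LIN(f − f1_X)` with `LIN` the linearization at `s̃`. -/
theorem IASB10_tighter_than_SCALE
    {ι : Type*} (I : Finset ι)
    (M st w intn : ℝ) (wI aI sI zI : ι → ℝ)
    (hM : 0 < M) (hst : st ∈ Set.Icc 0 M) (hstpos : 0 < st)
    (hw : 0 < w) (hintn : 0 < intn)
    (hwI : ∀ m ∈ I, 0 < wI m) (haI : ∀ m ∈ I, 0 ≤ aI m)
    (hsI : ∀ m ∈ I, 0 < sI m) (hzI : ∀ m ∈ I, 0 < zI m)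
    (xI αI cI : ι → ℝ)
    (hxI : ∀ m ∈ I, xI m = sI m / (aI m * st + zI m))
    (hαI : ∀ m ∈ I, αI m = xI m / (1 + xI m))
    (hcI : ∀ m ∈ I, cI m = wI m * (Real.log (1 + xI m) - αI m * Real.log (xI m)))
    (x0 α0 c0 : ℝ)
    (hx0 : x0 = st / intn)
    (hα0 : α0 = x0 / (1 + x0))
    (hc0 : c0 = w * (Real.log (1 + x0) - α0 * Real.log x0))
    (f f1IASB10 f1SCALE fIASB10 fSCALE : ℝ → ℝ)
    (hf : f = fun s => -w * Real.log (1 + s / intn)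
        - ∑ m ∈ I, wI m * Real.log (1 + sI m / (aI m * s + zI m)))
    (hf1IASB10 : f1IASB10 = fun s => -w * Real.log (1 + s / intn)
        - ∑ m ∈ I, (wI m * αI m * Real.log (sI m / (aI m * s + zI m)) + cI m))
    (hf1SCALE : f1SCALE = fun s => -w * α0 * Real.log (s / intn) - c0
        - ∑ m ∈ I, (wI m * αI m * Real.log (sI m / (aI m * s + zI m)) + cI m))
    (hfIASB10 : fIASB10 = fun s => f1IASB10 s + (f st - f1IASB10 st)
        + deriv (fun x => f x - f1IASB10 x) st * (s - st))
    (hfSCALE : fSCALE = fun s => f1SCALE s + (f st - f1SCALE st)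
        + deriv (fun x => f x - f1SCALE x) st * (s - st)) :
    ∀ s ∈ Set.Ioc 0 M, f s ≤ fIASB10 s ∧ fIASB10 s ≤ fSCALE s := by
  have hstd : ∀ m ∈ I, 0 < aI m * st + zI m := fun m hm =>
    add_pos_of_nonneg_of_pos (mul_nonneg (haI m hm) hstpos.le) (hzI m hm)
  have hαI' : ∀ m ∈ I, αI m = sI m / (aI m * st + zI m + sI m) := by
    intro m hm
    have hd := hstd m hm
    have hS := hsI m hm
    have h2 : aI m * st + zI m + sI m ≠ 0 := by positivity
    rw [hαI m hm, hxI m hm]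
    field_simp
  have hα0' : α0 = st / (intn + st) := by
    rw [hα0, hx0]
    have h2 : intn + st ≠ 0 := by positivity
    field_simp
  -- derivative computations
  have Hdir : HasDerivAt (fun x => -w * Real.log (1 + x / intn)) (-w * (1 / (intn + st))) st :=
    (hasDerivAt_log1div intn st hintn hstpos).const_mul (-w)
  have Hsum1 : HasDerivAt
      (fun x => ∑ m ∈ I, wI m * Real.log (1 + sI m / (aI m * x + zI m)))
      (∑ m ∈ I, wI m * (-(sI m * aI m) / ((aI m * st + zI m) * (aI m * st + zI m + sI m)))) st :=
    HasDerivAt.fun_sum fun m hm =>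
      (hasDerivAt_log1frac _ _ _ _ (hsI m hm) (hstd m hm)).const_mul (wI m)
  have Hsum2 : HasDerivAt
      (fun x => ∑ m ∈ I, (wI m * αI m * Real.log (sI m / (aI m * x + zI m)) + cI m))
      (∑ m ∈ I, wI m * αI m * (-(aI m / (aI m * st + zI m)))) st :=
    HasDerivAt.fun_sum fun m hm =>
      ((hasDerivAt_logfrac _ _ _ _ (hsI m hm) (hstd m hm)).const_mul (wI m * αI m)).add_const (cI m)
  have hsumzero :
      (∑ m ∈ I, wI m * (-(sI m * aI m) / ((aI m * st + zI m) * (aI m * st + zI m + sI m))))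
        = ∑ m ∈ I, wI m * αI m * (-(aI m / (aI m * st + zI m))) := by
    refine Finset.sum_congr rfl fun m hm => ?_
    rw [hαI' m hm]
    have hd := hstd m hm
    have h2 : aI m * st + zI m + sI m ≠ 0 := by have := hsI m hm; positivity
    field_simp
  have Hf : HasDerivAt f
      (-w * (1 / (intn + st))
        - ∑ m ∈ I, wI m * (-(sI m * aI m) / ((aI m * st + zI m) * (aI m * st + zI m + sI m)))) st := by
    rw [hf]; exact Hdir.sub Hsum1
  have Hf1I : HasDerivAt f1IASB10
      (-w * (1 / (intn + st))
        - ∑ m ∈ I, wI m * αI m * (-(aI m / (aI m * st + zI m)))) st := by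
    rw [hf1IASB10]; exact Hdir.sub Hsum2
  have Hdir2 : HasDerivAt (fun x => -w * α0 * Real.log (x / intn)) (-w * α0 * (1 / st)) st :=
    (hasDerivAt_logdiv intn st hintn hstpos).const_mul (-w * α0)
  have Hf1S : HasDerivAt f1SCALE
      (-w * α0 * (1 / st)
        - ∑ m ∈ I, wI m * αI m * (-(aI m / (aI m * st + zI m)))) st := by
    rw [hf1SCALE]; exact (Hdir2.sub_const c0).sub Hsum2
  have hderivI : deriv (fun x => f x - f1IASB10 x) st = 0 := by
    rw [(Hf.fun_sub Hf1I).deriv, hsumzero]; ring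
  have hderivS : deriv (fun x => f x - f1SCALE x) st = 0 := by
    rw [(Hf.fun_sub Hf1S).deriv, hsumzero, hα0']
    have h2 : intn + st ≠ 0 := by positivity
    field_simp
    ring
  -- value at st
  have hAst : f st - f1IASB10 st = 0 := by
    simp only [hf, hf1IASB10]
    have hrw : (-w * Real.log (1 + st / intn)
          - ∑ m ∈ I, wI m * Real.log (1 + sI m / (aI m * st + zI m)))
        - (-w * Real.log (1 + st / intn)
          - ∑ m ∈ I, (wI m * αI m * Real.log (sI m / (aI m * st + zI m)) + cI m))
        = ∑ m ∈ I, ((wI m * αI m * Real.log (sI m / (aI m * st + zI m)) + cI m)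
            - wI m * Real.log (1 + sI m / (aI m * st + zI m))) := by
      rw [Finset.sum_sub_distrib]; ring
    rw [hrw]
    refine Finset.sum_eq_zero fun m hm => ?_
    rw [← hxI m hm, hcI m hm, hαI m hm]
    ring
  have hBst : f1IASB10 st - f1SCALE st = 0 := by
    simp only [hf1IASB10, hf1SCALE]
    rw [← hx0, hc0, hα0]
    ring
  intro s hs
  obtain ⟨hs0, hsM⟩ := hs
  have hsd : ∀ m ∈ I, 0 < aI m * s + zI m := fun m hm =>
    add_pos_of_nonneg_of_pos (mul_nonneg (haI m hm) hs0.le) (hzI m hm)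
  have hA : f s - f1IASB10 s ≤ 0 := by
    simp only [hf, hf1IASB10]
    have hrw : (-w * Real.log (1 + s / intn)
          - ∑ m ∈ I, wI m * Real.log (1 + sI m / (aI m * s + zI m)))
        - (-w * Real.log (1 + s / intn)
          - ∑ m ∈ I, (wI m * αI m * Real.log (sI m / (aI m * s + zI m)) + cI m))
        = ∑ m ∈ I, ((wI m * αI m * Real.log (sI m / (aI m * s + zI m)) + cI m)
            - wI m * Real.log (1 + sI m / (aI m * s + zI m))) := by
      rw [Finset.sum_sub_distrib]; ring
    rw [hrw]
    refine Finset.sum_nonpos fun m hm => ?_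
    have hds := hsd m hm
    have hxm : 0 < xI m := by rw [hxI m hm]; have := hstd m hm; have := hsI m hm; positivity
    have hX : 0 < sI m / (aI m * s + zI m) := by have := hsI m hm; positivity
    have hkey := key_log_s14 (xI m) (sI m / (aI m * s + zI m)) hxm hX
    have h2 : wI m * αI m * Real.log (sI m / (aI m * s + zI m)) + cI m
          - wI m * Real.log (1 + sI m / (aI m * s + zI m))
        = wI m * ((Real.log (1 + xI m) - xI m / (1 + xI m) * Real.log (xI m))
            - (Real.log (1 + sI m / (aI m * s + zI m))
              - xI m / (1 + xI m) * Real.log (sI m / (aI m * s + zI m)))) := by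
      rw [hcI m hm, hαI m hm]; ring
    rw [h2]
    exact mul_nonpos_of_nonneg_of_nonpos (hwI m hm).le (by linarith)
  have hB : f1IASB10 s - f1SCALE s ≤ 0 := by
    simp only [hf1IASB10, hf1SCALE]
    have hx0pos : 0 < x0 := by rw [hx0]; positivity
    have hXpos : 0 < s / intn := by positivity
    have hkey := key_log_s14 x0 (s / intn) hx0pos hXpos
    have h2 : (-w * Real.log (1 + s / intn)
          - ∑ m ∈ I, (wI m * αI m * Real.log (sI m / (aI m * s + zI m)) + cI m))
        - (-w * α0 * Real.log (s / intn) - c0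
          - ∑ m ∈ I, (wI m * αI m * Real.log (sI m / (aI m * s + zI m)) + cI m))
        = w * ((Real.log (1 + x0) - x0 / (1 + x0) * Real.log x0)
            - (Real.log (1 + s / intn) - x0 / (1 + x0) * Real.log (s / intn))) := by
      rw [hc0, hα0]; ring
    rw [h2]
    exact mul_nonpos_of_nonneg_of_nonpos hw.le (by linarith)
  constructor
  · rw [hfIASB10, hderivI]
    simp only
    linarith
  · rw [hfIASB10, hfSCALE, hderivI, hderivS]
    simp only
    linarith
end

section
/- IASB6 tightness (improvement over IASB1 for any β ≥ 0): In the per-user per-tone spectrum optimization setup, let β ≥ 0 and define f2_IASB6(s) = −β·w·log(1 + s/int) − Σ_{m∈I} w_m·log(1 + s̃_m/int_m(s)). If f2_IASB6 is upper bounded on [0, M] by its tangent line at s̃, then for all s ∈ [0, M]: f(s) ≤ f^IASB6(s) ≤ f^IASB1(s). -/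
/-- IASB6 tightness (improvement over IASB1 for any `β ≥ 0`): in the per-user
per-tone spectrum optimization setup, let `β ≥ 0` and
`f2_IASB6(s) = −β·w·log(1 + s/int) − Σ_{m∈I} w_m·log(1 + s̃_m/int_m(s))`.
If `f2_IASB6` is upper bounded on `[0, M]` by its tangent line at `s̃`, then
`f ≤ f^IASB6 ≤ f^IASB1` on `[0, M]`. Here `f1_IASB6(s) = −w·(1 − β)·log(1 + s/int)`,
`f^IASB6 = f1_IASB6 + LIN(f2_IASB6)` and `f^IASB1 = f1_IASB1 + LIN(f − f1_IASB1)`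
with `LIN` the linearization at `s̃`. -/
theorem IASB6_tighter_than_IASB1
    {ι : Type*} (I : Finset ι)
    (M st w intn : ℝ) (wI aI sI zI : ι → ℝ)
    (hM : 0 < M) (hst : st ∈ Set.Icc 0 M)
    (hw : 0 < w) (hintn : 0 < intn)
    (hwI : ∀ m ∈ I, 0 < wI m) (haI : ∀ m ∈ I, 0 ≤ aI m)
    (hsI : ∀ m ∈ I, 0 < sI m) (hzI : ∀ m ∈ I, 0 < zI m)
    (β : ℝ) (hβ : 0 ≤ β)
    (f f1IASB1 f1IASB6 f2IASB6 fIASB1 fIASB6 : ℝ → ℝ)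
    (hf : f = fun s => -w * Real.log (1 + s / intn)
        - ∑ m ∈ I, wI m * Real.log (1 + sI m / (aI m * s + zI m)))
    (hf1IASB1 : f1IASB1 = fun s => -w * Real.log (1 + s / intn))
    (hf1IASB6 : f1IASB6 = fun s => -w * (1 - β) * Real.log (1 + s / intn))
    (hf2IASB6 : f2IASB6 = fun s => -β * w * Real.log (1 + s / intn)
        - ∑ m ∈ I, wI m * Real.log (1 + sI m / (aI m * s + zI m)))
    (htan : ∀ s ∈ Set.Icc 0 M,
        f2IASB6 s ≤ f2IASB6 st + deriv f2IASB6 st * (s - st))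
    (hfIASB1 : fIASB1 = fun s => f1IASB1 s + (f st - f1IASB1 st)
        + deriv (fun x => f x - f1IASB1 x) st * (s - st))
    (hfIASB6 : fIASB6 = fun s => f1IASB6 s + f2IASB6 st
        + deriv f2IASB6 st * (s - st)) :
    ∀ s ∈ Set.Icc 0 M, f s ≤ fIASB6 s ∧ fIASB6 s ≤ fIASB1 s := by
  obtain ⟨hst0, hstM⟩ := hst
  intro s hs
  obtain ⟨hs0, hsM⟩ := hs
  set G : ℝ → ℝ := fun x => ∑ m ∈ I, wI m * Real.log (1 + sI m / (aI m * x + zI m)) with hG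
  have hGdiff : DifferentiableAt ℝ G st := by
    apply DifferentiableAt.fun_sum
    intro m hm
    have ha := haI m hm
    have hz := hzI m hm
    have hsm := hsI m hm
    have hden : (0:ℝ) < aI m * st + zI m := by nlinarith
    have hd1 : DifferentiableAt ℝ (fun x => aI m * x + zI m) st := by fun_prop
    have hd2 : DifferentiableAt ℝ (fun x => 1 + sI m / (aI m * x + zI m)) st :=
      (differentiableAt_const _).add ((differentiableAt_const _).div hd1 hden.ne')
    have hval : 1 + sI m / (aI m * st + zI m) ≠ 0 := by positivity
    exact (hd2.log hval).const_mul _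
  set DG := deriv G st with hDGdef
  have hDG : HasDerivAt G DG st := hGdiff.hasDerivAt
  have hd0 : (0:ℝ) < intn + st := by linarith
  have hne : (1:ℝ) + st / intn ≠ 0 := by positivity
  have hLder : HasDerivAt (fun x : ℝ => Real.log (1 + x / intn)) (1/(intn+st)) st := by
    have h1 : HasDerivAt (fun x : ℝ => 1 + x / intn) (1/intn) st := by
      simpa using ((hasDerivAt_id st).div_const intn).const_add 1
    have h2 := (Real.hasDerivAt_log hne).comp st h1
    rw [show (1:ℝ)/(intn+st) = (1 + st/intn)⁻¹ * (1/intn) by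
      rw [inv_eq_one_div, div_mul_div_comm, one_mul, add_mul, one_mul, div_mul_cancel₀ _ hintn.ne']]
    exact h2
  have hf2eq : f2IASB6 = fun x => -(β*w) * Real.log (1 + x / intn) - G x := by
    rw [hf2IASB6, hG]
    funext x
    ring
  have hD6 : HasDerivAt f2IASB6 (-(β*w)*(1/(intn+st)) - DG) st := by
    rw [hf2eq]
    exact (hLder.const_mul (-(β*w))).sub hDG
  have hdiffeq : (fun x => f x - f1IASB1 x) = fun x => -G x := by
    rw [hf, hf1IASB1, hG]
    funext x
    ring
  have hDneg : HasDerivAt (fun x => f x - f1IASB1 x) (-DG) st := by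
    rw [hdiffeq]
    exact hDG.neg
  have e6 : deriv f2IASB6 st = -(β*w)*(1/(intn+st)) - DG := hD6.deriv
  have e1 : deriv (fun x => f x - f1IASB1 x) st = -DG := hDneg.deriv
  constructor
  · -- f s ≤ fIASB6 s
    have h1 := htan s ⟨hs0, hsM⟩
    have hsplit : f s = f1IASB6 s + f2IASB6 s := by
      rw [hf, hf1IASB6, hf2IASB6]; ring
    simp only [hfIASB6]
    linarith
  · -- fIASB6 s ≤ fIASB1 s
    have hkey : Real.log (1 + s / intn) ≤ Real.log (1 + st / intn) + (s - st) * (1/(intn+st)) := by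
      have hpos : (0:ℝ) < (intn + s) / (intn + st) := by positivity
      have h := Real.log_le_sub_one_of_pos hpos
      have hlog : Real.log ((intn+s)/(intn+st)) =
          Real.log (1 + s/intn) - Real.log (1 + st/intn) := by
        rw [← Real.log_div (by positivity) (by positivity)]
        congr 1
        field_simp
      have harith : (intn+s)/(intn+st) - 1 = (s - st) * (1/(intn+st)) := by
        field_simp
        ring
      linarith [hlog ▸ h, harith ▸ h]
    have hh : 0 ≤ Real.log (1 + st / intn) + (s - st) * (1/(intn+st)) - Real.log (1 + s / intn) := by
      linarith
    have hprod : 0 ≤ β * w * (Real.log (1 + st / intn) + (s - st) * (1/(intn+st)) - Real.log (1 + s / intn)) :=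
      mul_nonneg (by positivity) hh
    simp only [hfIASB6, hfIASB1]
    rw [e6, e1]
    simp only [hf1IASB6, hf1IASB1, hf2IASB6, hf]
    nlinarith [hprod]
end

section
/- Validity of the closed-form IASB6 tuning value (equations (39)–(40) analogue for β): In the per-user per-tone spectrum optimization setup, define β* = (int²/w) · Σ_{m∈I} w_m·s̃_m·a_m² · ( 1/(rec_m(M)·int_m(M)) ) · ( 1/rec_m(M) + 1/int_m(M) ). Then β* ≥ 0 and the function f2_IASB6(s) = −β*·w·log(1 + s/int) − Σ_{m∈I} w_m·log(1 + s̃_m/int_m(s)) satisfies f2_IASB6″(s) ≤ 0 for all s ∈ [0, M], i.e. f2_IASB6 is concave on [0, M]. -/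
lemma IASB6_aux (wm sm a q is iM : ℝ) (hwm : 0 < wm) (hsm : 0 < sm) (ha : 0 ≤ a)
    (his : 0 < is) (hiM : is ≤ iM) (hq0 : 0 ≤ q) (hq1 : q ≤ 1) :
    q * (wm * sm * a ^ 2 * (1 / ((sm + iM) * iM)) * (1 / (sm + iM) + 1 / iM))
      ≤ wm * (a ^ 2 / is ^ 2 - a ^ 2 / (sm + is) ^ 2) := by
  have hiM' : 0 < iM := lt_of_lt_of_le his hiM
  have h2 : is ≠ 0 := his.ne'
  have h3 : sm + is ≠ 0 := by positivity
  have h1 : wm * (a ^ 2 / is ^ 2 - a ^ 2 / (sm + is) ^ 2)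
      = wm * sm * a ^ 2 * (1 / ((sm + is) * is)) * (1 / (sm + is) + 1 / is) := by
    field_simp
    ring
  rw [h1]
  calc q * (wm * sm * a ^ 2 * (1 / ((sm + iM) * iM)) * (1 / (sm + iM) + 1 / iM))
      ≤ 1 * (wm * sm * a ^ 2 * (1 / ((sm + iM) * iM)) * (1 / (sm + iM) + 1 / iM)) := by
        apply mul_le_mul_of_nonneg_right hq1 (by positivity)
    _ = wm * sm * a ^ 2 * (1 / ((sm + iM) * iM)) * (1 / (sm + iM) + 1 / iM) := one_mul _
    _ ≤ wm * sm * a ^ 2 * (1 / ((sm + is) * is)) * (1 / (sm + is) + 1 / is) := by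
        gcongr <;> nlinarith

/-- Validity of the closed-form IASB6 tuning value: with
`β* = (int²/w)·Σ_{m∈I} w_m·s̃_m·a_m²·(1/(rec_m(M)·int_m(M)))·(1/rec_m(M) + 1/int_m(M))`,
we have `β* ≥ 0` and the function
`f2_IASB6(s) = −β*·w·log(1 + s/int) − Σ_{m∈I} w_m·log(1 + s̃_m/int_m(s))` has
nonpositive second derivative on `[0, M]`, i.e. it is concave on `[0, M]`. -/
theorem IASB6_tuning_value_valid
    {ι : Type*} (I : Finset ι)
    (M st w intn : ℝ) (wI aI sI zI : ι → ℝ)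
    (hM : 0 < M) (hst : st ∈ Set.Icc 0 M)
    (hw : 0 < w) (hintn : 0 < intn)
    (hwI : ∀ m ∈ I, 0 < wI m) (haI : ∀ m ∈ I, 0 ≤ aI m)
    (hsI : ∀ m ∈ I, 0 < sI m) (hzI : ∀ m ∈ I, 0 < zI m)
    (βstar : ℝ)
    (hβstar : βstar = intn ^ 2 / w *
        ∑ m ∈ I, wI m * sI m * (aI m) ^ 2 *
          (1 / ((sI m + aI m * M + zI m) * (aI m * M + zI m))) *
          (1 / (sI m + aI m * M + zI m) + 1 / (aI m * M + zI m)))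
    (f2IASB6 : ℝ → ℝ)
    (hf2 : f2IASB6 = fun s => -βstar * w * Real.log (1 + s / intn)
        - ∑ m ∈ I, wI m * Real.log (1 + sI m / (aI m * s + zI m))) :
    0 ≤ βstar ∧
    (∀ s ∈ Set.Icc 0 M, deriv (deriv f2IASB6) s ≤ 0) ∧
    ConcaveOn ℝ (Set.Icc 0 M) f2IASB6 := by
  -- the open set where everything is differentiable
  set U : Set ℝ := {s | 0 < intn + s ∧ ∀ m ∈ I, 0 < aI m * s + zI m} with hUdef
  have hUopen : IsOpen U := by
    have hUeq : U = {s : ℝ | 0 < intn + s} ∩ ⋂ m ∈ I, {s : ℝ | 0 < aI m * s + zI m} := by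
      ext x; simp [hUdef, Set.mem_iInter]
    rw [hUeq]
    exact (isOpen_lt continuous_const (continuous_const.add continuous_id)).inter
      (isOpen_biInter_finset fun m _ =>
        isOpen_lt continuous_const ((continuous_const.mul continuous_id).add continuous_const))
  have hmemU : ∀ s ∈ Set.Icc (0 : ℝ) M, s ∈ U := by
    intro s hs
    exact ⟨by linarith [hs.1], fun m hm =>
      add_pos_of_nonneg_of_pos (mul_nonneg (haI m hm) hs.1) (hzI m hm)⟩
  set g : ℝ → ℝ := fun s => -βstar * w * (intn + s)⁻¹
      - ∑ m ∈ I, wI m * (aI m / (sI m + (aI m * s + zI m)) - aI m / (aI m * s + zI m))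
    with hgdef
  set h : ℝ → ℝ := fun s => βstar * w * ((intn + s) ^ 2)⁻¹
      - ∑ m ∈ I, wI m * (aI m ^ 2 / (aI m * s + zI m) ^ 2
          - aI m ^ 2 / (sI m + (aI m * s + zI m)) ^ 2)
    with hhdef
  have hg : ∀ s ∈ U, HasDerivAt f2IASB6 (g s) s := by
    intro s hs
    obtain ⟨hs1, hs2⟩ := hs
    rw [hf2, hgdef]
    have d1 : HasDerivAt (fun x : ℝ => 1 + x / intn) intn⁻¹ s := by
      simpa using ((hasDerivAt_id' s).div_const intn).const_add 1
    have pos1 : 0 < 1 + s / intn := by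
      have he : 1 + s / intn = (intn + s) / intn := by field_simp
      rw [he]; positivity
    have l1 : HasDerivAt (fun x : ℝ => -βstar * w * Real.log (1 + x / intn))
        (-βstar * w * (intn⁻¹ / (1 + s / intn))) s := (d1.log pos1.ne').const_mul _
    have e1 : intn⁻¹ / (1 + s / intn) = (intn + s)⁻¹ := by
      rw [div_eq_iff pos1.ne']
      field_simp
    rw [e1] at l1
    have l2 : HasDerivAt (fun x : ℝ => ∑ m ∈ I, wI m * Real.log (1 + sI m / (aI m * x + zI m)))
        (∑ m ∈ I, wI m * (aI m / (sI m + (aI m * s + zI m)) - aI m / (aI m * s + zI m))) s := by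
      apply HasDerivAt.fun_sum
      intro m hm
      have hden := hs2 m hm
      have hsm := hsI m hm
      have hrecP : 0 < sI m + (aI m * s + zI m) := by linarith
      have dlin : HasDerivAt (fun x : ℝ => aI m * x + zI m) (aI m) s := by
        simpa using ((hasDerivAt_id' s).const_mul (aI m)).add_const (zI m)
      have dv : HasDerivAt (fun x : ℝ => 1 + sI m / (aI m * x + zI m))
          (-(sI m * aI m) / (aI m * s + zI m) ^ 2) s := by
        have hd := ((hasDerivAt_const s (sI m)).div dlin hden.ne').const_add 1
        refine hd.congr_deriv ?_
        ring
      have hv : 0 < 1 + sI m / (aI m * s + zI m) := by positivity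
      have dlog := (dv.log hv.ne').const_mul (wI m)
      refine dlog.congr_deriv ?_
      field_simp
      ring
    exact l1.sub l2
  have hh : ∀ s ∈ U, HasDerivAt g (h s) s := by
    intro s hs
    obtain ⟨hs1, hs2⟩ := hs
    rw [hgdef, hhdef]
    have d1 : HasDerivAt (fun x : ℝ => intn + x) 1 s := (hasDerivAt_id' s).const_add intn
    have i1 := (d1.inv hs1.ne').const_mul (-βstar * w)
    have l2 : HasDerivAt
        (fun x : ℝ => ∑ m ∈ I, wI m * (aI m / (sI m + (aI m * x + zI m)) - aI m / (aI m * x + zI m)))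
        (∑ m ∈ I, wI m * (aI m ^ 2 / (aI m * s + zI m) ^ 2
          - aI m ^ 2 / (sI m + (aI m * s + zI m)) ^ 2)) s := by
      apply HasDerivAt.fun_sum
      intro m hm
      have hden := hs2 m hm
      have hsm := hsI m hm
      have hrecP : 0 < sI m + (aI m * s + zI m) := by linarith
      have dlin : HasDerivAt (fun x : ℝ => aI m * x + zI m) (aI m) s := by
        simpa using ((hasDerivAt_id' s).const_mul (aI m)).add_const (zI m)
      have dr := (hasDerivAt_const s (aI m)).div (dlin.const_add (sI m)) hrecP.ne'
      have di := (hasDerivAt_const s (aI m)).div dlin hden.ne'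
      have := (dr.sub di).const_mul (wI m)
      refine this.congr_deriv ?_
      ring
    have := i1.sub l2
    refine this.congr_deriv ?_
    ring
  -- first derivative identification
  have hev : ∀ s ∈ Set.Icc (0 : ℝ) M, deriv f2IASB6 =ᶠ[nhds s] g := by
    intro s hs
    filter_upwards [hUopen.mem_nhds (hmemU s hs)] with x hx
    exact (hg x hx).deriv
  have hderiv2 : ∀ s ∈ Set.Icc (0 : ℝ) M, deriv (deriv f2IASB6) s = h s := by
    intro s hs
    rw [(hev s hs).deriv_eq]
    exact (hh s (hmemU s hs)).deriv
  -- nonnegativity of βstar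
  have hβ0 : 0 ≤ βstar := by
    rw [hβstar]
    apply mul_nonneg (by positivity)
    apply Finset.sum_nonneg
    intro m hm
    have h1 := hwI m hm
    have h2 := hsI m hm
    have h3 := hzI m hm
    have h4 := haI m hm
    have h5 : 0 < aI m * M + zI m := by positivity
    have h6 : 0 < sI m + aI m * M + zI m := by positivity
    positivity
  -- second derivative nonpositive
  have hle : ∀ s ∈ Set.Icc (0 : ℝ) M, h s ≤ 0 := by
    intro s hs
    have hs0 := hs.1
    have hsM := hs.2
    have hips : 0 < intn + s := by linarith
    have hq0 : (0 : ℝ) ≤ intn ^ 2 / (intn + s) ^ 2 := by positivity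
    have hq1 : intn ^ 2 / (intn + s) ^ 2 ≤ 1 := by
      rw [div_le_one (by positivity)]
      nlinarith
    have hfirst : βstar * w * ((intn + s) ^ 2)⁻¹ = ∑ m ∈ I,
        (intn ^ 2 / (intn + s) ^ 2) * (wI m * sI m * aI m ^ 2 *
          (1 / ((sI m + (aI m * M + zI m)) * (aI m * M + zI m))) *
          (1 / (sI m + (aI m * M + zI m)) + 1 / (aI m * M + zI m))) := by
      rw [hβstar, Finset.mul_sum, Finset.sum_mul, Finset.sum_mul]
      refine Finset.sum_congr rfl fun m hm => ?_
      have h2 := hsI m hm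
      have h3 := hzI m hm
      have h4 := haI m hm
      have h5 : 0 < aI m * M + zI m := by positivity
      have h6 : 0 < sI m + aI m * M + zI m := by positivity
      field_simp
      ring
    have hsum : βstar * w * ((intn + s) ^ 2)⁻¹ ≤ ∑ m ∈ I, wI m *
        (aI m ^ 2 / (aI m * s + zI m) ^ 2 - aI m ^ 2 / (sI m + (aI m * s + zI m)) ^ 2) := by
      rw [hfirst]
      refine Finset.sum_le_sum fun m hm => ?_
      have h1 := hwI m hm
      have h2 := hsI m hm
      have h3 := hzI m hm
      have h4 := haI m hm
      exact IASB6_aux (wI m) (sI m) (aI m) (intn ^ 2 / (intn + s) ^ 2)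
        (aI m * s + zI m) (aI m * M + zI m) h1 h2 h4
        (add_pos_of_nonneg_of_pos (mul_nonneg h4 hs0) h3)
        (by nlinarith) hq0 hq1
    rw [hhdef]
    simp only
    linarith
  refine ⟨hβ0, fun s hs => by rw [hderiv2 s hs]; exact hle s hs, ?_⟩
  apply concaveOn_of_deriv2_nonpos (convex_Icc 0 M)
  · intro s hs
    exact (hg s (hmemU s hs)).differentiableAt.continuousAt.continuousWithinAt
  · intro s hs
    have hs' : s ∈ Set.Icc (0 : ℝ) M := interior_subset hs
    exact (hg s (hmemU s hs')).differentiableAt.differentiableWithinAt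
  · intro s hs
    have hs' : s ∈ Set.Icc (0 : ℝ) M := interior_subset hs
    exact (((hh s (hmemU s hs')).differentiableAt).congr_of_eventuallyEq
      (hev s hs')).differentiableWithinAt
  · intro s hs
    have hs' : s ∈ Set.Icc (0 : ℝ) M := interior_subset hs
    have : deriv^[2] f2IASB6 s = deriv (deriv f2IASB6) s := rfl
    rw [this, hderiv2 s hs']
    exact hle s hs'
end
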